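/- arXiv:2005.01447 — 11 statements merged into one kernel-verified Lean document; each statement's English description precedes it below -/
import Mathlib

section
/- For positive integers k, n, s: k H_k^{(s)}(x_1,...,x_n) = \sum_{j=1}^{k} P_j^{(s)}(x_1,...,x_n) H_{k-j}^{(s)}(x_1,...,x_n). -/
/-- Generating series of the generalized complete symmetric functions. -/
noncomputable def HgS (s n : ℕ) (x : Fin n → ℂ) : PowerSeries ℂ :=
  ∏ i, (∑ j ∈ Finset.range (s + 1), PowerSeries.C ((-x i) ^ j) * PowerSeries.X ^ j)⁻¹

/-- `H_k^{(s)}(x₁,…,xₙ)`. -/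
noncomputable def Hg (s n : ℕ) (x : Fin n → ℂ) (k : ℕ) : ℂ :=
  PowerSeries.coeff k (HgS s n x)

/-- `P_j^{(s)} = c_j^{(s)} p_j` where `p_j` is the `j`-th power sum and
`c_j^{(s)} = (-1)^j s` if `(s+1) ∣ j`, and `(-1)^(j-1)` otherwise. -/
noncomputable def Pg (s n : ℕ) (x : Fin n → ℂ) (j : ℕ) : ℂ :=
  (if (s + 1) ∣ j then (-1 : ℂ) ^ j * s else (-1 : ℂ) ^ (j - 1)) * ∑ i, x i ^ j

open PowerSeries Finset

/-- one factor of the denominator -/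
noncomputable def fS (s : ℕ) (a : ℂ) : ℂ⟦X⟧ :=
  ∑ j ∈ Finset.range (s + 1), PowerSeries.C (a ^ j) * PowerSeries.X ^ j

/-- the logarithmic derivative series of `(fS s a)⁻¹` -/
noncomputable def QS (s : ℕ) (a : ℂ) : ℂ⟦X⟧ :=
  PowerSeries.mk fun j => if j = 0 then 0 else (if (s + 1) ∣ j then (s : ℂ) else -1) * a ^ j

lemma coeff_fS (s : ℕ) (a : ℂ) (m : ℕ) :
    PowerSeries.coeff m (fS s a) = if m ≤ s then a ^ m else 0 := by
  simp only [fS, map_sum, PowerSeries.coeff_C_mul, PowerSeries.coeff_X_pow, mul_ite, mul_one,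
    mul_zero, Finset.sum_ite_eq', Finset.mem_range]
  simp [Nat.lt_succ_iff]

lemma constantCoeff_fS (s : ℕ) (a : ℂ) : PowerSeries.constantCoeff (fS s a) = 1 := by
  have := coeff_fS s a 0
  simpa [PowerSeries.coeff_zero_eq_constantCoeff] using this

lemma card_window (s N : ℕ) (h : s < N) :
    ((Finset.Ioc (N - (s + 1)) N).filter (fun j => (s + 1) ∣ j)).card = 1 := by
  have hle : N - (s + 1) ≤ N := Nat.sub_le _ _
  have hun : Finset.Ioc 0 (N - (s + 1)) ∪ Finset.Ioc (N - (s + 1)) N = Finset.Ioc 0 N :=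
    Finset.Ioc_union_Ioc_eq_Ioc (Nat.zero_le _) hle
  have hdis : Disjoint (Finset.Ioc 0 (N - (s + 1))) (Finset.Ioc (N - (s + 1)) N) := by
    rw [Finset.disjoint_left]
    intro j hj1 hj2
    rw [Finset.mem_Ioc] at hj1 hj2
    omega
  have hcard : ((Finset.Ioc 0 (N - (s + 1))).filter (fun j => (s + 1) ∣ j)).card
      + ((Finset.Ioc (N - (s + 1)) N).filter (fun j => (s + 1) ∣ j)).card
      = ((Finset.Ioc 0 N).filter (fun j => (s + 1) ∣ j)).card := by
    rw [← hun, Finset.filter_union, Finset.card_union_of_disjoint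
      (Finset.disjoint_filter_filter hdis)]
  rw [Nat.Ioc_filter_dvd_card_eq_div, Nat.Ioc_filter_dvd_card_eq_div] at hcard
  have hdiv : N / (s + 1) = (N - (s + 1)) / (s + 1) + 1 :=
    Nat.div_eq_sub_div (Nat.succ_pos s) h
  omega

lemma sum_window (s N : ℕ) (h : s < N) :
    ∑ j ∈ Finset.Ioc (N - (s + 1)) N, (if (s + 1) ∣ j then (s : ℂ) else -1) = 0 := by
  have : ∀ j : ℕ, (if (s + 1) ∣ j then (s : ℂ) else -1)
      = (if (s + 1) ∣ j then ((s : ℂ) + 1) else 0) - 1 := by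
    intro j; split <;> ring
  rw [Finset.sum_congr rfl fun j _ => this j, Finset.sum_sub_distrib, Finset.sum_ite,
    Finset.sum_const, Finset.sum_const, Finset.sum_const]
  rw [card_window s N h, Nat.card_Ioc]
  have : N - (N - (s + 1)) = s + 1 := by omega
  rw [this]
  push_cast
  ring

/-- key identity for a single factor -/
lemma key_fS (s : ℕ) (a : ℂ) :
    QS s a * fS s a = -((PowerSeries.X : ℂ⟦X⟧) * PowerSeries.derivative ℂ (fS s a)) := by
  ext N
  rw [PowerSeries.coeff_mul, Finset.Nat.sum_antidiagonal_eq_sum_range_succ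
    (fun p q => PowerSeries.coeff p (QS s a) * PowerSeries.coeff q (fS s a))]
  simp only [QS, PowerSeries.coeff_mk, coeff_fS]
  rcases Nat.eq_zero_or_pos N with hN | hN
  · subst hN; simp
  -- N ≥ 1
  have hins : Finset.range (N + 1) = insert 0 (Finset.Ioc 0 N) := by
    ext j; simp
  rw [hins, Finset.sum_insert (by simp)]
  have h0 : (if (0:ℕ) = 0 then (0:ℂ) else (if (s + 1) ∣ 0 then (s : ℂ) else -1) * a ^ 0) = 0 :=
    if_pos rfl
  rw [h0, zero_mul, zero_add]
  have hstep : ∀ j ∈ Finset.Ioc 0 N,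
      (if j = 0 then 0 else (if (s + 1) ∣ j then (s : ℂ) else -1) * a ^ j)
        * (if N - j ≤ s then a ^ (N - j) else 0)
      = (if N - j ≤ s then (if (s + 1) ∣ j then (s : ℂ) else -1) else 0) * a ^ N := by
    intro j hj
    rw [Finset.mem_Ioc] at hj
    rw [if_neg (by omega)]
    by_cases hc : N - j ≤ s
    · rw [if_pos hc, if_pos hc, mul_assoc, ← pow_add]
      congr 2
      omega
    · rw [if_neg hc, if_neg hc, mul_zero, zero_mul]
  rw [Finset.sum_congr rfl hstep, ← Finset.sum_mul]
  -- RHS coefficient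
  obtain ⟨n, rfl⟩ := Nat.exists_eq_add_of_lt hN
  simp only [zero_add] at *
  rw [map_neg, PowerSeries.coeff_succ_X_mul, PowerSeries.coeff_derivative, coeff_fS]
  by_cases hNs : n + 1 ≤ s
  · -- small case : every j in (0, N] is not divisible by s+1, and N - j ≤ s always
    have hsum : ∀ j ∈ Finset.Ioc 0 (n + 1),
        (if n + 1 - j ≤ s then (if (s + 1) ∣ j then (s : ℂ) else -1) else 0) = -1 := by
      intro j hj
      rw [Finset.mem_Ioc] at hj
      rw [if_pos (by omega), if_neg]
      rintro ⟨c, rfl⟩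
      rcases Nat.eq_zero_or_pos c with rfl | hc
      · omega
      · nlinarith [hj.1, hj.2]
    rw [Finset.sum_congr rfl hsum, Finset.sum_const, Nat.card_Ioc, if_pos hNs]
    push_cast
    ring
  · -- large case : the window sum vanishes
    push_neg at hNs
    have hsum : ∀ j ∈ Finset.Ioc 0 (n + 1),
        (if n + 1 - j ≤ s then (if (s + 1) ∣ j then (s : ℂ) else -1) else 0)
        = (if (n + 1) - (s + 1) < j then (if (s + 1) ∣ j then (s : ℂ) else -1) else 0) := by
      intro j hj
      rw [Finset.mem_Ioc] at hj
      congr 1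
      simp only [eq_iff_iff]
      omega
    rw [Finset.sum_congr rfl hsum, ← Finset.sum_filter]
    have hset : (Finset.Ioc 0 (n + 1)).filter (fun j => (n + 1) - (s + 1) < j)
        = Finset.Ioc ((n + 1) - (s + 1)) (n + 1) := by
      ext j; simp; omega
    rw [hset, sum_window s (n + 1) hNs, if_neg (by omega), zero_mul, zero_mul, neg_zero]

lemma key_inv (s : ℕ) (a : ℂ) :
    (PowerSeries.X : ℂ⟦X⟧) * PowerSeries.derivative ℂ (fS s a)⁻¹
      = QS s a * (fS s a)⁻¹ := by
  have hc : PowerSeries.constantCoeff (fS s a) ≠ 0 := by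
    rw [constantCoeff_fS]; exact one_ne_zero
  have hinv : (fS s a)⁻¹ * fS s a = 1 := PowerSeries.inv_mul_cancel _ hc
  rw [PowerSeries.derivative_inv']
  have : (PowerSeries.X : ℂ⟦X⟧) * (-(fS s a)⁻¹ ^ 2 * PowerSeries.derivative ℂ (fS s a))
      = (fS s a)⁻¹ ^ 2 * (-(PowerSeries.X * PowerSeries.derivative ℂ (fS s a))) := by ring
  rw [this, ← key_fS]
  calc (fS s a)⁻¹ ^ 2 * (QS s a * fS s a)
      = QS s a * (fS s a)⁻¹ * ((fS s a)⁻¹ * fS s a) := by ring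
    _ = QS s a * (fS s a)⁻¹ := by rw [hinv, mul_one]

lemma prod_rule {ι : Type*} (t : Finset ι) (g Q : ι → ℂ⟦X⟧)
    (h : ∀ i ∈ t, (PowerSeries.X : ℂ⟦X⟧) * PowerSeries.derivative ℂ (g i) = Q i * g i) :
    (PowerSeries.X : ℂ⟦X⟧) * PowerSeries.derivative ℂ (∏ i ∈ t, g i)
      = (∑ i ∈ t, Q i) * ∏ i ∈ t, g i := by
  induction t using Finset.cons_induction with
  | empty => simp
  | cons a t ha ih =>
    rw [Finset.prod_cons, Finset.sum_cons, Derivation.leibniz]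
    have h1 := h a (Finset.mem_cons_self a t)
    have h2 := ih fun i hi => h i (Finset.mem_cons_of_mem hi)
    have : (PowerSeries.X : ℂ⟦X⟧) * (g a • PowerSeries.derivative ℂ (∏ i ∈ t, g i)
        + (∏ i ∈ t, g i) • PowerSeries.derivative ℂ (g a))
        = g a * (PowerSeries.X * PowerSeries.derivative ℂ (∏ i ∈ t, g i))
        + (∏ i ∈ t, g i) * (PowerSeries.X * PowerSeries.derivative ℂ (g a)) := by
      simp only [smul_eq_mul]; ring
    rw [this, h1, h2]
    ring

theorem stmt4 (k n s : ℕ) (hk : 0 < k) (hn : 0 < n) (hs : 0 < s) (x : Fin n → ℂ) :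
    (k : ℂ) * Hg s n x k =
      ∑ j ∈ Finset.Icc 1 k, Pg s n x j * Hg s n x (k - j) := by
  have hmain : (PowerSeries.X : ℂ⟦X⟧) * PowerSeries.derivative ℂ (HgS s n x)
      = (∑ i, QS s (-x i)) * HgS s n x := by
    apply prod_rule
    intro i _
    exact key_inv s (-x i)
  -- identify the sum of QS with the Pg series
  have hP : (∑ i, QS s (-x i))
      = PowerSeries.mk fun j => if j = 0 then 0 else Pg s n x j := by
    ext j
    simp only [map_sum, QS, PowerSeries.coeff_mk]
    rcases Nat.eq_zero_or_pos j with rfl | hj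
    · simp
    have hj0 : ¬ j = 0 := by omega
    rw [if_neg hj0]
    have hstep : ∀ i : Fin n, (if j = 0 then (0:ℂ)
        else (if (s + 1) ∣ j then (s : ℂ) else -1) * (-x i) ^ j)
        = (if (s + 1) ∣ j then (s : ℂ) else -1) * ((-1) ^ j * x i ^ j) := by
      intro i
      rw [if_neg hj0, neg_pow]
    rw [Finset.sum_congr rfl fun i _ => hstep i]
    rw [← Finset.mul_sum, ← Finset.mul_sum]
    unfold Pg
    rw [← mul_assoc]
    congr 1
    by_cases hd : (s + 1) ∣ j
    · rw [if_pos hd, if_pos hd]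
      ring
    · rw [if_neg hd, if_neg hd]
      have hpow : (-1 : ℂ) ^ (j - 1) = -(-1 : ℂ) ^ j := by
        conv_rhs => rw [show j = (j - 1) + 1 from by omega, pow_succ]
        ring
      rw [hpow]
      ring
  rw [hP] at hmain
  have hcoeff := congrArg (PowerSeries.coeff k) hmain
  obtain ⟨m, rfl⟩ := Nat.exists_eq_add_of_lt hk
  simp only [zero_add] at *
  rw [PowerSeries.coeff_succ_X_mul, PowerSeries.coeff_derivative, PowerSeries.coeff_mul,
    Finset.Nat.sum_antidiagonal_eq_sum_range_succ
      (fun p q => PowerSeries.coeff p (PowerSeries.mk fun j => if j = 0 then 0 else Pg s n x j)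
        * PowerSeries.coeff q (HgS s n x))] at hcoeff
  simp only [PowerSeries.coeff_mk] at hcoeff
  have hins : Finset.range (m + 1 + 1) = insert 0 (Finset.Ioc 0 (m + 1)) := by
    ext j; simp
  rw [hins, Finset.sum_insert (by simp), if_pos rfl, zero_mul, zero_add] at hcoeff
  have hIcc : Finset.Ioc 0 (m + 1) = Finset.Icc 1 (m + 1) := by
    ext j; simp; omega
  rw [hIcc] at hcoeff
  have hclean : ∀ j ∈ Finset.Icc 1 (m + 1),
      (if j = 0 then (0:ℂ) else Pg s n x j) * PowerSeries.coeff (m + 1 - j) (HgS s n x)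
      = Pg s n x j * PowerSeries.coeff (m + 1 - j) (HgS s n x) := by
    intro j hj
    rw [Finset.mem_Icc] at hj
    rw [if_neg (by omega)]
  rw [Finset.sum_congr rfl hclean] at hcoeff
  unfold Hg
  rw [mul_comm]
  push_cast
  exact hcoeff
end

section
/- For positive integers k, n, s: P_k^{(s)}(x_1,...,x_n) = \sum_{j=1}^{k} (-1)^{j-1} j E_j^{(s)}(x_1,...,x_n) H_{k-j}^{(s)}(x_1,...,x_n). -/
/-- Generating series of the generalized elementary symmetric functions. -/
noncomputable def EgS (s n : ℕ) (x : Fin n → ℂ) : PowerSeries ℂ :=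
  ∏ i, ∑ j ∈ Finset.range (s + 1), PowerSeries.C (x i ^ j) * PowerSeries.X ^ j

/-- `E_k^{(s)}(x₁,…,xₙ)`. -/
noncomputable def Eg (s n : ℕ) (x : Fin n → ℂ) (k : ℕ) : ℂ :=
  PowerSeries.coeff k (EgS s n x)

section Aux
open PowerSeries Finset

noncomputable def gp (s : ℕ) (c : ℂ) : ℂ⟦X⟧ := ∑ j ∈ range (s+1), C (c^j) * X^j

lemma gp_eq (s : ℕ) (c : ℂ) : gp s c = ∑ j ∈ range (s+1), (C c * X)^j := by
  simp [gp, mul_pow, map_pow]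

lemma gp_geom (s : ℕ) (c : ℂ) : (1 - C c * X) * gp s c = 1 - (C c * X)^(s+1) := by
  have := geom_sum_mul (C c * X) (s+1)
  rw [gp_eq]; linear_combination -this

lemma coeff_gp (s : ℕ) (c : ℂ) (k : ℕ) :
    coeff k (gp s c) = if k ≤ s then c^k else 0 := by
  rw [gp, map_sum]
  simp only [coeff_C_mul, coeff_X_pow, mul_ite, mul_one, mul_zero]
  rw [Finset.sum_ite_eq (range (s+1)) k (fun j => c^j)]
  simp [Nat.lt_succ_iff]

lemma constCoeff_gp (s : ℕ) (c : ℂ) : constantCoeff (gp s c) = 1 := by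
  have := coeff_gp s c 0
  simpa [coeff_zero_eq_constantCoeff] using this

noncomputable def S1 (c : ℂ) : ℂ⟦X⟧ := PowerSeries.mk fun k => if k = 0 then 0 else c^k

noncomputable def S2 (s : ℕ) (c : ℂ) : ℂ⟦X⟧ :=
  PowerSeries.mk fun k => if k ≠ 0 ∧ (s+1) ∣ k then c^k else 0

noncomputable def pser (s : ℕ) (c : ℂ) : ℂ⟦X⟧ :=
  PowerSeries.mk fun k => if k = 0 then 0 else
    -c^k + (if (s+1) ∣ k then ((s:ℂ)+1) * c^k else 0)

lemma hS1 (c : ℂ) : (1 - C c * X) * S1 c = C c * X := by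
  have h : (1 - C c * X) * S1 c = S1 c - C c * (X * S1 c) := by ring
  rw [h]
  ext k
  rcases k with _ | k
  · simp [S1]
  · rw [map_sub, coeff_C_mul, coeff_succ_X_mul, coeff_C_mul, coeff_X]
    rcases k with _ | k
    · simp [S1]
    · simp [S1, pow_succ']

lemma hS2 (s : ℕ) (c : ℂ) :
    (1 - (C c * X)^(s+1)) * S2 s c = (C c * X)^(s+1) := by
  have h : (1 - (C c * X)^(s+1)) * S2 s c
      = S2 s c - C (c^(s+1)) * (X^(s+1) * S2 s c) := by
    rw [mul_pow, map_pow]; ring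
  rw [h, mul_pow, ← map_pow]
  ext k
  rw [map_sub, coeff_C_mul, coeff_X_pow_mul', coeff_C_mul, coeff_X_pow]
  by_cases hk : s + 1 ≤ k
  · simp only [hk, if_pos]
    obtain ⟨d, rfl⟩ : ∃ d, k = d + (s+1) := ⟨k - (s+1), by omega⟩
    have h2 : d + (s+1) - (s+1) = d := by omega
    rw [h2]
    rcases Nat.eq_zero_or_pos d with rfl | hd
    · simp [S2]
    · have h3 : (s+1) ∣ d + (s+1) ↔ (s+1) ∣ d := by
        constructor <;> intro h4
        · simpa using (Nat.dvd_sub h4 (dvd_refl _))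
        · exact Dvd.dvd.add h4 (dvd_refl _)
      by_cases h5 : (s+1) ∣ d
      · have : d + (s+1) ≠ 0 := by omega
        simp [S2, h3, h5, this, hd.ne', pow_add]
        ring
      · simp [S2, h3, h5, hd.ne']
  · simp only [hk, if_neg, if_false]
    have : k = 0 ∨ (k ≠ 0 ∧ ¬ ((s+1) ∣ k)) := by
      rcases Nat.eq_zero_or_pos k with rfl | h6
      · left; rfl
      · right; exact ⟨h6.ne', fun h7 => hk (Nat.le_of_dvd h6 h7)⟩
    have hne : k ≠ s + 1 := by omega
    rcases this with rfl | ⟨h6, h7⟩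
    · simp [S2]
    · simp [S2, h6, h7, hne]

lemma pser_eq (s : ℕ) (c : ℂ) :
    pser s c = -(S1 c) + C ((s:ℂ)+1) * S2 s c := by
  ext k
  rw [map_add, map_neg, coeff_C_mul]
  rcases Nat.eq_zero_or_pos k with rfl | hk
  · simp [pser, S1, S2]
  · by_cases h : (s+1) ∣ k <;> simp [pser, S1, S2, hk.ne', h, mul_comm]

lemma aux_q {R : Type*} [CommRing R] (u : R) (s : ℕ) :
    (1 - u) * (∑ j ∈ range (s+1), (-(j:R)) * u^j)
      = (s:R) * u^(s+1) + 1 - (∑ j ∈ range (s+1), u^j) := by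
  induction s with
  | zero => simp
  | succ m ih =>
    rw [sum_range_succ (fun j => (-(j:R)) * u^j), sum_range_succ (fun j => u^j)]
    push_cast
    push_cast at ih
    linear_combination ih

noncomputable def qp (s : ℕ) (c : ℂ) : ℂ⟦X⟧ :=
  ∑ j ∈ range (s+1), C (-(j:ℂ) * c^j) * X^j

lemma qp_eq (s : ℕ) (c : ℂ) :
    qp s c = ∑ j ∈ range (s+1), (-(j:ℂ⟦X⟧)) * (C c * X)^j := by
  refine Finset.sum_congr rfl fun j _ => ?_
  rw [mul_pow, ← map_pow, map_mul, map_neg, map_natCast]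
  ring

lemma hqp (s : ℕ) (c : ℂ) :
    (1 - C c * X) * qp s c
      = C (s:ℂ) * (C c * X)^(s+1) + 1 - gp s c := by
  rw [qp_eq, gp_eq, aux_q (C c * X) s, map_natCast]

lemma one_sub_ne (c : ℂ) : (1 - C c * X) ≠ 0 := by
  intro h
  have := congrArg (constantCoeff) h
  simp at this

lemma gp_ne (s : ℕ) (c : ℂ) : gp s c ≠ 0 := by
  intro h
  have := congrArg (constantCoeff) h
  rw [constCoeff_gp] at this
  simp at this

lemma pser_mul_gp (s : ℕ) (c : ℂ) : pser s c * gp s c = qp s c := by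
  set u := C c * X with hu
  have hg := gp_geom s c
  have hq := hqp s c
  have h1 := hS1 c
  have h2 := hS2 s c
  have hA : (1 - u) * (1 - u^(s+1)) * pser s c
      = -(u * (1 - u^(s+1))) + C ((s:ℂ)+1) * (u^(s+1) * (1 - u)) := by
    rw [pser_eq]
    linear_combination (-(1 - u^(s+1))) * h1 + (C ((s:ℂ)+1) * (1-u)) * h2
  have hCs : C ((s:ℂ)+1) = C (s:ℂ) + 1 := by rw [map_add, map_one]
  have hne : (1 - u)^2 * gp s c ≠ 0 :=
    mul_ne_zero (pow_ne_zero _ (one_sub_ne c)) (gp_ne s c)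
  refine mul_left_cancel₀ hne ?_
  rw [hCs] at hA
  linear_combination ((1-u) * gp s c * pser s c - u * gp s c + (1-u) * gp s c + 2*u*gp s c) * hg
    + gp s c * hA - (1-u) * gp s c * hq

lemma coeff_qp (s : ℕ) (c : ℂ) (k : ℕ) :
    coeff k (qp s c) = if k ≤ s then -(k:ℂ) * c^k else 0 := by
  rw [qp, map_sum]
  simp only [coeff_C_mul, coeff_X_pow, mul_ite, mul_one, mul_zero]
  rw [Finset.sum_ite_eq (range (s+1)) k (fun j => -(j:ℂ) * c^j)]
  simp [Nat.lt_succ_iff]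

lemma coeff_X_dX (f : ℂ⟦X⟧) (k : ℕ) :
    coeff k (X * PowerSeries.derivative ℂ f) = (k:ℂ) * coeff k f := by
  rcases k with _ | k
  · simp [coeff_zero_X_mul]
  · rw [coeff_succ_X_mul, PowerSeries.coeff_derivative]
    push_cast
    ring

lemma Xdgp (s : ℕ) (c : ℂ) :
    X * PowerSeries.derivative ℂ (gp s c) = -(qp s c) := by
  ext k
  rw [coeff_X_dX, map_neg, coeff_qp, coeff_gp]
  by_cases h : k ≤ s <;> simp [h]

lemma main_prod (s : ℕ) {ι : Type*} [DecidableEq ι] (t : Finset ι) (c : ι → ℂ) :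
    (∑ i ∈ t, pser s (c i)) * ∏ i ∈ t, gp s (c i)
      = -(X * PowerSeries.derivative ℂ (∏ i ∈ t, gp s (c i))) := by
  induction t using Finset.induction_on with
  | empty => simp
  | insert a t' ha ih =>
    rw [Finset.sum_insert ha, Finset.prod_insert ha, Derivation.leibniz]
    rw [smul_eq_mul, smul_eq_mul]
    have h1 := pser_mul_gp s (c a)
    have h2 := Xdgp s (c a)
    linear_combination (∏ i ∈ t', gp s (c i)) * h1 + (∏ i ∈ t', gp s (c i)) * h2
      + gp s (c a) * ih

lemma rescale_gp (s : ℕ) (c : ℂ) : rescale (-1) (gp s c) = gp s (-c) := by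
  ext k
  rw [coeff_rescale, coeff_gp, coeff_gp]
  by_cases h : k ≤ s
  · rw [if_pos h, if_pos h, show (-c)^k = ((-1:ℂ))^k * c^k from by rw [← neg_one_mul, mul_pow]]
  · rw [if_neg h, if_neg h, mul_zero]

lemma coeff_G (s n : ℕ) (x : Fin n → ℂ) (k : ℕ) :
    coeff k (∏ i, gp s (-(x i))) = (-1:ℂ)^k * Eg s n x k := by
  have h : (∏ i, gp s (-(x i))) = rescale (-1) (EgS s n x) := by
    have hE : EgS s n x = ∏ i, gp s (x i) := rfl
    rw [hE, map_prod]
    exact Finset.prod_congr rfl fun i _ => (rescale_gp s (x i)).symm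
  rw [h, coeff_rescale]
  rfl

lemma GH (s n : ℕ) (x : Fin n → ℂ) : (∏ i, gp s (-(x i))) * HgS s n x = 1 := by
  rw [show HgS s n x = ∏ i, (gp s (-(x i)))⁻¹ from rfl, ← Finset.prod_mul_distrib]
  rw [Finset.prod_eq_one]
  intro i _
  exact PowerSeries.mul_inv_cancel _ (by rw [constCoeff_gp]; norm_num)

lemma coeff_pser_neg (s : ℕ) (a : ℂ) (k : ℕ) (hk : k ≠ 0) :
    coeff k (pser s (-a)) = (if (s+1) ∣ k then (-1:ℂ)^k * s else (-1:ℂ)^(k-1)) * a^k := by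
  rw [pser, coeff_mk]
  have hk1 : k - 1 + 1 = k := by omega
  simp only [hk, if_false]
  have hnp : (-a)^k = ((-1:ℂ))^k * a^k := by rw [← neg_one_mul, mul_pow]
  by_cases h : (s+1) ∣ k
  · simp only [h, if_true, hnp]
    ring
  · simp only [h, if_false, hnp, add_zero]
    have hsg : (-1:ℂ)^(k-1) = -(-1:ℂ)^k := by
      have h9 : (-1:ℂ)^k = (-1)^(k-1) * (-1) := by rw [← pow_succ, hk1]
      rw [h9]; ring
    rw [hsg]; ring

theorem stmt5 (k n s : ℕ) (hk : 0 < k) (hn : 0 < n) (hs : 0 < s) (x : Fin n → ℂ) :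
    Pg s n x k =
      ∑ j ∈ Finset.Icc 1 k, (-1 : ℂ) ^ (j - 1) * j * Eg s n x j * Hg s n x (k - j) := by
  set G := ∏ i, gp s (-(x i)) with hG
  have hK := main_prod s Finset.univ (fun i => -(x i))
  have hGH := GH s n x
  have hP : (∑ i, pser s (-(x i))) = -(X * PowerSeries.derivative ℂ G) * HgS s n x := by
    calc ∑ i, pser s (-(x i))
        = (∑ i, pser s (-(x i))) * (G * HgS s n x) := by rw [hGH, mul_one]
      _ = ((∑ i, pser s (-(x i))) * G) * HgS s n x := by ring
      _ = _ := by rw [hG, hK]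
  have hco := congrArg (coeff k) hP
  rw [map_sum] at hco
  have hL : (∑ i, coeff k (pser s (-(x i)))) = Pg s n x k := by
    rw [Pg, Finset.mul_sum]
    exact Finset.sum_congr rfl fun i _ => by rw [coeff_pser_neg s (x i) k hk.ne']
  have hterm : ∀ j, coeff j (-(X * PowerSeries.derivative ℂ G))
      = -((j:ℂ) * ((-1:ℂ)^j * Eg s n x j)) := by
    intro j
    rw [map_neg, coeff_X_dX, hG, coeff_G]
  have hR : coeff k (-(X * PowerSeries.derivative ℂ G) * HgS s n x)
      = ∑ j ∈ Finset.Icc 1 k, (-1:ℂ)^(j-1) * j * Eg s n x j * Hg s n x (k-j) := by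
    rw [PowerSeries.coeff_mul, Finset.Nat.sum_antidiagonal_eq_sum_range_succ_mk]
    rw [Finset.range_eq_Ico, Finset.sum_eq_sum_Ico_succ_bot (by omega : 0 < k+1)]
    rw [hterm 0]
    simp only [Nat.cast_zero, zero_mul, neg_zero, zero_add]
    rw [Finset.Ico_add_one_right_eq_Icc]
    refine Finset.sum_congr rfl fun j hj => ?_
    have hj1 : 1 ≤ j := (Finset.mem_Icc.mp hj).1
    rw [hterm j]
    have hj2 : j - 1 + 1 = j := by omega
    have hsg : (-1:ℂ)^(j-1) = -(-1:ℂ)^j := by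
      have h9 : (-1:ℂ)^j = (-1)^(j-1) * (-1) := by rw [← pow_succ, hj2]
      rw [h9]; ring
    rw [Hg, hsg]; ring
  rw [hL, hR] at hco
  exact hco

end Aux
end

section
/- For positive integers k and s: \sum_{t_1 + 2t_2 + ... + s t_s = k} \frac{(-1)^{t_1+t_2+...+t_s} \cdot k}{t_1+t_2+...+t_s} \binom{t_1+t_2+...+t_s}{t_1,t_2,...,t_s} equals s if (s+1) divides k, and equals -1 otherwise. -/
open Finset Fintype Function Nat

noncomputable def V (s n : ℕ) : ℚ :=
  ∑ t ∈ (Fintype.piFinset fun _ : Fin s => Finset.range (n+1)).filter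
      (fun t => ∑ i, (i.1+1) * t i = n),
    (-1)^(∑ i, t i) * (Nat.multinomial Finset.univ t : ℚ)

lemma tuple_le {s n : ℕ} {t : Fin s → ℕ} (h : ∑ i, (i.1+1) * t i = n) (j : Fin s) :
    (j.1+1) * t j ≤ n := by
  rw [← h]
  exact Finset.single_le_sum (f := fun i : Fin s => (i.1+1) * t i)
    (fun i _ => Nat.zero_le _) (Finset.mem_univ j)

lemma lemA {s n N : ℕ} (h : n ≤ N) :
    (Fintype.piFinset fun _ : Fin s => Finset.range (N+1)).filter
        (fun t => ∑ i, (i.1+1) * t i = n)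
      = (Fintype.piFinset fun _ : Fin s => Finset.range (n+1)).filter
        (fun t => ∑ i, (i.1+1) * t i = n) := by
  ext t
  simp only [Finset.mem_filter, Fintype.mem_piFinset, Finset.mem_range]
  constructor
  · rintro ⟨h1, h2⟩
    refine ⟨fun i => ?_, h2⟩
    have := tuple_le h2 i
    nlinarith [this]
  · rintro ⟨h1, h2⟩
    exact ⟨fun i => by have := h1 i; omega, h2⟩

lemma sum_weight_update {s : ℕ} (t : Fin s → ℕ) (i : Fin s) (v : ℕ) :
    ∑ j, (j.1+1) * (Function.update t i v) j
      = (i.1+1) * v + ∑ j ∈ Finset.univ \ {i}, (j.1+1) * t j := by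
  have h1 : ∀ j, (j.1+1) * (Function.update t i v) j
      = Function.update (fun j : Fin s => (j.1+1) * t j) i ((i.1+1) * v) j :=
    fun j => Function.apply_update (fun (j : Fin s) n => (j.1+1) * n) t i v j
  rw [Finset.sum_congr rfl (fun j _ => h1 j), Finset.sum_update_of_mem (Finset.mem_univ i)]

lemma sum_split {s : ℕ} (t : Fin s → ℕ) (i : Fin s) :
    ∑ j, (j.1+1) * t j = (i.1+1) * t i + ∑ j ∈ Finset.univ \ {i}, (j.1+1) * t j :=
  Finset.sum_eq_add_sum_sdiff_singleton_of_mem (Finset.mem_univ i) _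

lemma lemE {s : ℕ} (i : Fin s) (n : ℕ) :
    ∑ t ∈ (Fintype.piFinset fun _ : Fin s => Finset.range (n+1)).filter
        (fun t => ∑ j, (j.1+1) * t j = n),
      (if 0 < t i then
        (-1:ℚ)^(∑ j, t j) * (Nat.multinomial Finset.univ (Function.update t i (t i - 1)) : ℚ)
       else 0)
      = -(if i.1 + 1 ≤ n then V s (n - (i.1+1)) else 0) := by
  by_cases hni : i.1 + 1 ≤ n
  · rw [if_pos hni]
    rw [← Finset.sum_filter]
    rw [show V s (n - (i.1+1))
        = ∑ u ∈ (Fintype.piFinset fun _ : Fin s => Finset.range (n+1)).filter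
            (fun u => ∑ j, (j.1+1) * u j = n - (i.1+1)),
          (-1:ℚ)^(∑ j, u j) * (Nat.multinomial Finset.univ u : ℚ) by
      rw [V, ← lemA (show n - (i.1+1) ≤ n by omega)]]
    rw [← Finset.sum_neg_distrib]
    refine Finset.sum_nbij' (fun t => Function.update t i (t i - 1))
      (fun u => Function.update u i (u i + 1)) ?_ ?_ ?_ ?_ ?_
    · rintro t ht
      simp only [Finset.mem_filter, Fintype.mem_piFinset, Finset.mem_range] at ht ⊢
      obtain ⟨⟨hmem, hsum⟩, hpos⟩ := ht
      constructor
      · intro j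
        rcases eq_or_ne j i with rfl | hne
        · rw [Function.update_self]; have := hmem j; omega
        · rw [Function.update_of_ne hne]; exact hmem j
      · rw [sum_weight_update, ← hsum, sum_split t i]
        have hkey : (i.1+1) * (t i - 1) + (i.1+1) = (i.1+1) * t i := by
          calc (i.1+1) * (t i - 1) + (i.1+1) = (i.1+1) * (t i - 1 + 1) := by ring
          _ = (i.1+1) * t i := by rw [Nat.sub_add_cancel hpos]
        omega
    · rintro u hu
      simp only [Finset.mem_filter, Fintype.mem_piFinset, Finset.mem_range] at hu ⊢
      obtain ⟨hmem, hsum⟩ := hu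
      have hui : (i.1+1) * u i ≤ n - (i.1+1) := tuple_le hsum i
      have hui2 : u i ≤ n - (i.1+1) := le_trans (Nat.le_mul_of_pos_left _ (by omega)) hui
      refine ⟨⟨fun j => ?_, ?_⟩, ?_⟩
      · rcases eq_or_ne j i with rfl | hne
        · rw [Function.update_self]; omega
        · rw [Function.update_of_ne hne]; exact hmem j
      · rw [sum_weight_update, ← Nat.sub_add_cancel hni, ← hsum, sum_split u i]; ring
      · rw [Function.update_self]; omega
    · rintro t ht
      simp only [Finset.mem_filter] at ht
      simp only [Function.update_self, Function.update_idem]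
      rw [Nat.sub_add_cancel ht.2, Function.update_eq_self]
    · rintro u hu
      simp only [Function.update_self, Function.update_idem]
      rw [Nat.add_sub_cancel, Function.update_eq_self]
    · rintro t ht
      simp only [Finset.mem_filter, Fintype.mem_piFinset, Finset.mem_range] at ht
      obtain ⟨⟨hmem, hsum⟩, hpos⟩ := ht
      have hm : 1 ≤ ∑ j, t j :=
        le_trans hpos (Finset.single_le_sum (fun j _ => Nat.zero_le _) (Finset.mem_univ i))
      have hsu : ∑ j, Function.update t i (t i - 1) j = (∑ j, t j) - 1 := by
        rw [Finset.sum_update_of_mem (Finset.mem_univ i)]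
        have := Finset.sum_eq_add_sum_sdiff_singleton_of_mem (Finset.mem_univ i) t
        omega
      rw [hsu]
      have : (-1:ℚ)^(∑ j, t j) = -(-1:ℚ)^((∑ j, t j) - 1) := by
        conv_lhs => rw [show ∑ j, t j = ((∑ j, t j) - 1) + 1 by omega]
        rw [pow_succ]; ring
      rw [this]; ring
  · rw [if_neg hni, neg_zero]
    refine Finset.sum_eq_zero fun t ht => ?_
    simp only [Finset.mem_filter, Fintype.mem_piFinset, Finset.mem_range] at ht
    rw [if_neg]
    intro hpos
    have h1 := tuple_le ht.2 i
    have h2 : (i.1+1) ≤ (i.1+1) * t i := Nat.le_mul_of_pos_right _ hpos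
    omega

lemma lemB {s : ℕ} (t : Fin s → ℕ) (i : Fin s) (ht : 0 < t i) :
    Nat.multinomial Finset.univ (Function.update t i (t i - 1)) * (∑ j, t j)
      = Nat.multinomial Finset.univ t * t i := by
  set u := Function.update t i (t i - 1) with hu
  have hsum : ∑ j, u j = (∑ j, t j) - 1 := by
    rw [hu, Finset.sum_update_of_mem (Finset.mem_univ i)]
    have : ∑ j, t j = t i + ∑ j ∈ Finset.univ \ {i}, t j :=
      Finset.sum_eq_add_sum_sdiff_singleton_of_mem (Finset.mem_univ i) t
    omega
  have hm : 1 ≤ ∑ j, t j := by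
    calc 1 ≤ t i := ht
    _ ≤ ∑ j, t j := Finset.single_le_sum (fun j _ => Nat.zero_le _) (Finset.mem_univ i)
  have hprod : ∏ j, (t j)! = (∏ j, (u j)!) * t i := by
    have h1 : ∏ j, (u j)! = ∏ j, Function.update (fun j => (t j)!) i ((t i - 1)!) j :=
      Finset.prod_congr rfl (fun j _ => Function.apply_update (fun _ n => n !) t i (t i - 1) j)
    rw [h1, Finset.prod_update_of_mem (Finset.mem_univ i),
      Finset.prod_eq_mul_prod_sdiff_singleton_of_mem (Finset.mem_univ i) (fun j => (t j)!)]
    have : (t i)! = t i * (t i - 1)! := (Nat.mul_factorial_pred ht.ne').symm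
    rw [this]; ring
  have key : (∏ j, (u j)!) * (Nat.multinomial Finset.univ u * (∑ j, t j))
      = (∏ j, (u j)!) * (Nat.multinomial Finset.univ t * t i) := by
    calc (∏ j, (u j)!) * (Nat.multinomial Finset.univ u * (∑ j, t j))
        = ((∏ j, (u j)!) * Nat.multinomial Finset.univ u) * (∑ j, t j) := by ring
      _ = (∑ j, u j)! * (∑ j, t j) := by rw [Nat.multinomial_spec]
      _ = (∑ j, t j) * ((∑ j, t j) - 1)! := by rw [hsum]; ring
      _ = (∑ j, t j)! := Nat.mul_factorial_pred (by omega)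
      _ = (∏ j, (t j)!) * Nat.multinomial Finset.univ t := (Nat.multinomial_spec _ _).symm
      _ = (∏ j, (u j)!) * (Nat.multinomial Finset.univ t * t i) := by rw [hprod]; ring
  exact Nat.eq_of_mul_eq_mul_left (Finset.prod_pos (fun j _ => Nat.factorial_pos _)) key

lemma pascal {s : ℕ} (t : Fin s → ℕ) (hm : 1 ≤ ∑ j, t j) :
    ∑ i ∈ Finset.univ.filter (fun i => 0 < t i),
      Nat.multinomial Finset.univ (Function.update t i (t i - 1))
    = Nat.multinomial Finset.univ t := by
  have key : (∑ i ∈ Finset.univ.filter (fun i => 0 < t i),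
      Nat.multinomial Finset.univ (Function.update t i (t i - 1))) * (∑ j, t j)
      = Nat.multinomial Finset.univ t * (∑ j, t j) := by
    rw [Finset.sum_mul]
    rw [Finset.sum_congr rfl (fun i hi => lemB t i (Finset.mem_filter.mp hi).2)]
    rw [← Finset.mul_sum]
    congr 1
    exact Finset.sum_filter_of_ne (fun i _ h => Nat.pos_of_ne_zero (by omega))
  exact Nat.eq_of_mul_eq_mul_right (by omega) key



lemma msum_pos {s n : ℕ} {t : Fin s → ℕ} (hn : 1 ≤ n) (h : ∑ i, (i.1+1) * t i = n) :
    1 ≤ ∑ j, t j := by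
  by_contra hc
  push_neg at hc
  interval_cases hsum : (∑ j, t j)
  have : ∀ j ∈ Finset.univ, t j = 0 := fun j hj => by
    have := (Finset.sum_eq_zero_iff).mp hsum j hj; exact this
  rw [Finset.sum_congr rfl (fun i hi => by rw [this i hi, mul_zero])] at h
  simp at h
  omega

lemma V_rec {s n : ℕ} (hn : 1 ≤ n) :
    V s n = -∑ j ∈ Finset.range s, (if j+1 ≤ n then V s (n-(j+1)) else 0) := by
  have step1 : V s n = ∑ t ∈ (Fintype.piFinset fun _ : Fin s => Finset.range (n+1)).filter
      (fun t => ∑ i, (i.1+1) * t i = n),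
      ∑ i : Fin s, (if 0 < t i then
        (-1:ℚ)^(∑ j, t j) * (Nat.multinomial Finset.univ (Function.update t i (t i - 1)) : ℚ)
       else 0) := by
    rw [V]
    refine Finset.sum_congr rfl fun t ht => ?_
    simp only [Finset.mem_filter] at ht
    have hm : 1 ≤ ∑ j, t j := msum_pos hn ht.2
    rw [← Finset.sum_filter, ← Finset.mul_sum, ← Nat.cast_sum, pascal t hm]
  rw [step1, Finset.sum_comm]
  rw [Finset.sum_congr rfl (fun i _ => lemE i n)]
  rw [Finset.sum_neg_distrib]
  congr 1
  exact Fin.sum_univ_eq_sum_range (fun j => if j+1 ≤ n then V s (n-(j+1)) else 0) s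

noncomputable def vv (s n : ℕ) : ℚ :=
  if (s+1) ∣ n then 1 else if (s+1) ∣ (n+s) then -1 else 0

lemma vv_zero (s : ℕ) : vv s 0 = 1 := by simp [vv]

lemma vv_one {s : ℕ} (hs : 0 < s) : vv s 1 = -1 := by
  have h1 : ¬ (s+1) ∣ 1 := by
    intro h; have := Nat.le_of_dvd one_pos h; omega
  simp [vv, h1, Nat.add_comm 1 s]

lemma vv_mid {s n : ℕ} (h2 : 2 ≤ n) (hn : n ≤ s) : vv s n = 0 := by
  have h1 : ¬ (s+1) ∣ n := by
    intro h; have := Nat.le_of_dvd (by omega) h; omega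
  have h2' : ¬ (s+1) ∣ (n+s) := by
    rintro ⟨c, hc⟩
    rcases c with _ | _ | c <;> nlinarith
  simp [vv, h1, h2']

lemma vv_period (s n : ℕ) : vv s (n + (s+1)) = vv s n := by
  have e1 : (s+1) ∣ (n + (s+1)) ↔ (s+1) ∣ n := Nat.dvd_add_self_right
  have e2 : (s+1) ∣ (n + (s+1) + s) ↔ (s+1) ∣ (n + s) := by
    rw [show n + (s+1) + s = (n+s) + (s+1) by ring]; exact Nat.dvd_add_self_right
  simp only [vv, e1, e2]

lemma sum_vv_init {s n : ℕ} (hs : 0 < s) (h2 : 2 ≤ n) (h : n ≤ s + 1) :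
    ∑ j ∈ Finset.range n, vv s j = 0 := by
  induction n with
  | zero => omega
  | succ m ih =>
    rcases Nat.lt_or_ge m 2 with hm | hm
    · interval_cases m
      · omega
      · simp [Finset.sum_range_succ, vv_zero, vv_one hs]
    · rw [Finset.sum_range_succ, ih (by omega) (by omega), vv_mid hm (by omega), zero_add]

lemma window {s : ℕ} (hs : 0 < s) : ∀ n, s ≤ n →
    ∑ j ∈ Finset.range (s+1), vv s (n - j) = 0 := by
  intro n
  induction n with
  | zero =>
    intro h
    have hs0 : s = 0 := by omega
    omega
  | succ m ih =>
    intro h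
    rcases Nat.lt_or_ge m s with hm | hm
    · -- base case : m + 1 = s
      have hms : s = m + 1 := by omega
      subst hms
      have hrefl : ∑ j ∈ Finset.range (m+2), vv (m+1) (m+1 - j)
          = ∑ j ∈ Finset.range (m+2), vv (m+1) j := by
        have h0 := Finset.sum_range_reflect (fun j => vv (m+1) j) (m+2)
        simpa using h0
      rw [show m+1+1 = m+2 from rfl, hrefl]
      exact sum_vv_init (by omega) (by omega) (le_refl _)
    · -- step
      have hsum' := ih hm
      have step : ∑ j ∈ Finset.range (s+1), vv s (m + 1 - j)
          = vv s (m+1) + ∑ j ∈ Finset.range s, vv s (m - j) := by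
        rw [Finset.sum_range_succ' (fun j => vv s (m + 1 - j)) s]
        simp only [Nat.succ_sub_succ]
        rw [Nat.sub_zero, add_comm]
      rw [Finset.sum_range_succ] at hsum'
      have hper : vv s (m+1) = vv s (m - s) := by
        rw [show m + 1 = (m - s) + (s+1) by omega, vv_period]
      rw [step, hper]
      linarith [hsum']

lemma vv_rec {s n : ℕ} (hs : 0 < s) (hn : 1 ≤ n) :
    vv s n = -∑ j ∈ Finset.range s, (if j+1 ≤ n then vv s (n-(j+1)) else 0) := by
  rcases le_or_gt n s with hns | hns
  · have h1 : ∑ j ∈ Finset.range s, (if j+1 ≤ n then vv s (n-(j+1)) else 0)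
        = ∑ j ∈ Finset.range n, (if j+1 ≤ n then vv s (n-(j+1)) else 0) := by
      refine (Finset.sum_subset (Finset.range_subset_range.mpr hns) fun x _ hx => ?_).symm
      rw [Finset.mem_range] at hx
      rw [if_neg (by omega)]
    have h2 : ∑ j ∈ Finset.range n, (if j+1 ≤ n then vv s (n-(j+1)) else 0)
        = ∑ j ∈ Finset.range n, vv s (n-1-j) := by
      refine Finset.sum_congr rfl fun j hj => ?_
      rw [Finset.mem_range] at hj
      rw [if_pos (by omega), show n - (j+1) = n-1-j by omega]
    rw [h1, h2, Finset.sum_range_reflect (fun j => vv s j) n]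
    rcases Nat.lt_or_ge n 2 with h | h
    · have : n = 1 := by omega
      subst this
      simp [vv_one hs, vv_zero]
    · rw [sum_vv_init hs h (by omega), vv_mid h hns, neg_zero]
  · have hw := window hs n (by omega)
    rw [Finset.sum_range_succ' (fun j => vv s (n - j)) s] at hw
    simp only [Nat.sub_zero] at hw
    have h1 : ∑ j ∈ Finset.range s, (if j+1 ≤ n then vv s (n-(j+1)) else 0)
        = ∑ j ∈ Finset.range s, vv s (n-(j+1)) := by
      refine Finset.sum_congr rfl fun j hj => ?_
      rw [Finset.mem_range] at hj
      rw [if_pos (by omega)]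
    rw [h1]
    linarith [hw]



lemma V_zero (s : ℕ) : V s 0 = 1 := by
  rw [V]
  have hset : (Fintype.piFinset fun _ : Fin s => Finset.range (0+1)).filter
      (fun t => ∑ i, (i.1+1) * t i = 0) = {fun _ => 0} := by
    ext t
    simp only [Finset.mem_filter, Fintype.mem_piFinset, Finset.mem_range, Finset.mem_singleton]
    constructor
    · rintro ⟨h1, _⟩; funext i; have := h1 i; omega
    · rintro rfl; simp
  rw [hset, Finset.sum_singleton]
  simp [Nat.multinomial]



lemma vvval {s k : ℕ} (hs : 0 < s) (j : ℕ) (hj : j < s) (hjk : j + 1 ≤ k) :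
    vv s (k - (j+1)) = if j+1 = k % (s+1) then (1:ℚ)
      else if j+1 = (k+s) % (s+1) then -1 else 0 := by
  have hd1 : (s+1) ∣ (k - (j+1)) ↔ j+1 = k % (s+1) := by
    rw [← Nat.modEq_iff_dvd' hjk]
    unfold Nat.ModEq
    rw [Nat.mod_eq_of_lt (show j+1 < s+1 by omega)]
  have hd2 : (s+1) ∣ (k - (j+1) + s) ↔ j+1 = (k+s) % (s+1) := by
    rw [show k - (j+1) + s = k + s - (j+1) by omega]
    rw [← Nat.modEq_iff_dvd' (by omega)]
    unfold Nat.ModEq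
    rw [Nat.mod_eq_of_lt (show j+1 < s+1 by omega)]
  simp only [vv, hd1, hd2]

lemma final_sum {s k : ℕ} (hs : 0 < s) (hk : 0 < k) :
    -∑ j ∈ Finset.range s, ((j:ℚ)+1) * (if j+1 ≤ k then vv s (k-(j+1)) else 0)
      = if (s+1) ∣ k then (s:ℚ) else -1 := by
  rcases le_or_gt k s with hks | hks
  · -- k ≤ s case
    have hnd : ¬ (s+1) ∣ k := by
      intro h; have := Nat.le_of_dvd hk h; omega
    rw [if_neg hnd]
    rcases Nat.lt_or_ge k 2 with hk2 | hk2
    · -- k = 1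
      have hk1 : k = 1 := by omega
      subst hk1
      have hpt : ∀ j ∈ Finset.range s, ((j:ℚ)+1) * (if j+1 ≤ 1 then vv s (1-(j+1)) else 0)
          = if j = 0 then 1 else 0 := by
        intro j _
        rcases Nat.eq_zero_or_pos j with rfl | hj
        · simp [vv_zero]
        · rw [if_neg (by omega), if_neg (by omega), mul_zero]
      rw [Finset.sum_congr rfl hpt, Finset.sum_ite_eq' (Finset.range s) 0 (fun _ => (1:ℚ)),
        if_pos (Finset.mem_range.mpr hs)]
    · -- 2 ≤ k ≤ s
      have hpt : ∀ j ∈ Finset.range s, ((j:ℚ)+1) * (if j+1 ≤ k then vv s (k-(j+1)) else 0)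
          = (if j = k-1 then (k:ℚ) else 0) + (if j = k-2 then -((k:ℚ)-1) else 0) := by
        intro j hj
        rw [Finset.mem_range] at hj
        by_cases h1 : j = k-1
        · subst h1
          rw [if_pos (by omega), show k - (k-1+1) = 0 by omega, vv_zero,
            if_pos rfl, if_neg (by omega)]
          have : ((k-1 : ℕ):ℚ) = (k:ℚ) - 1 := by
            push_cast [Nat.cast_sub (show 1 ≤ k by omega)]; ring
          rw [this]; ring
        · by_cases h2 : j = k-2
          · subst h2
            rw [if_pos (by omega), show k - (k-2+1) = 1 by omega, vv_one hs,
              if_neg h1, if_pos rfl]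
            have : ((k-2 : ℕ):ℚ) = (k:ℚ) - 2 := by
              push_cast [Nat.cast_sub (show 2 ≤ k by omega)]; ring
            rw [this]; ring
          · rw [if_neg h1, if_neg h2, add_zero]
            by_cases h3 : j+1 ≤ k
            · rw [if_pos h3, vv_mid (show 2 ≤ k - (j+1) by omega) (by omega), mul_zero]
            · rw [if_neg h3, mul_zero]
      rw [Finset.sum_congr rfl hpt, Finset.sum_add_distrib,
        Finset.sum_ite_eq' (Finset.range s) (k-1) (fun _ => (k:ℚ)),
        Finset.sum_ite_eq' (Finset.range s) (k-2) (fun _ => -((k:ℚ)-1)),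
        if_pos (Finset.mem_range.mpr (by omega)), if_pos (Finset.mem_range.mpr (by omega))]
      ring
  · -- k > s case
    set r := k % (s+1) with hr
    set q := (k+s) % (s+1) with hq
    clear_value r q
    have hrlt : r < s+1 := by rw [hr]; exact Nat.mod_lt _ (by omega)
    have hqlt : q < s+1 := by rw [hq]; exact Nat.mod_lt _ (by omega)
    have hsmod : s % (s+1) = s := Nat.mod_eq_of_lt (by omega)
    have hqr : q = (r + s) % (s+1) := by
      rw [hq, Nat.add_mod k s (s+1), hsmod, hr]
    have hq0 : r = 0 → q = s := by
      intro h; rw [hqr, h, zero_add, hsmod]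
    have hq1 : 1 ≤ r → q = r - 1 := by
      intro h
      rw [hqr, show r + s = (r-1) + (s+1) by omega, Nat.add_mod_right,
        Nat.mod_eq_of_lt (by omega)]
    have hrq : r ≠ q := by
      rcases Nat.eq_zero_or_pos r with h | h
      · rw [hq0 h, h]; omega
      · rw [hq1 h]; omega
    have hpt : ∀ j ∈ Finset.range s, ((j:ℚ)+1) * (if j+1 ≤ k then vv s (k-(j+1)) else 0)
        = (if j+1 = r then (r:ℚ) else 0) + (if j+1 = q then -(q:ℚ) else 0) := by
      intro j hj
      rw [Finset.mem_range] at hj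
      rw [if_pos (show j+1 ≤ k by omega), vvval hs j hj (by omega), ← hr, ← hq]
      by_cases h1 : j+1 = r
      · have h2 : ¬ (j+1 = q) := by rw [h1]; exact hrq
        rw [if_pos h1, if_pos h1, if_neg h2, add_zero, mul_one]
        exact_mod_cast congrArg (fun n : ℕ => (n:ℚ)) h1
      · by_cases h2 : j+1 = q
        · rw [if_neg h1, if_pos h2, if_neg h1, if_pos h2, zero_add, ← h2]
          push_cast; ring
        · rw [if_neg h1, if_neg h2, if_neg h1, if_neg h2, mul_zero, add_zero]
    rw [Finset.sum_congr rfl hpt, Finset.sum_add_distrib]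
    have S1 : ∑ j ∈ Finset.range s, (if j+1 = r then (r:ℚ) else 0)
        = if 1 ≤ r then (r:ℚ) else 0 := by
      rcases Nat.eq_zero_or_pos r with h | h
      · rw [if_neg (by omega)]
        exact Finset.sum_eq_zero fun j _ => if_neg (by omega)
      · rw [if_pos (show 1 ≤ r from h)]
        have hc : ∀ j ∈ Finset.range s, (if j+1 = r then (r:ℚ) else 0)
            = (if j = r-1 then (r:ℚ) else 0) := fun j _ => if_congr (by omega) rfl rfl
        rw [Finset.sum_congr rfl hc, Finset.sum_ite_eq' (Finset.range s) (r-1) fun _ => (r:ℚ),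
          if_pos (Finset.mem_range.mpr (by omega))]
    have S2 : ∑ j ∈ Finset.range s, (if j+1 = q then -(q:ℚ) else 0)
        = if 1 ≤ q then -(q:ℚ) else 0 := by
      rcases Nat.eq_zero_or_pos q with h | h
      · rw [if_neg (by omega)]
        exact Finset.sum_eq_zero fun j _ => if_neg (by omega)
      · rw [if_pos (show 1 ≤ q from h)]
        have hc : ∀ j ∈ Finset.range s, (if j+1 = q then -(q:ℚ) else 0)
            = (if j = q-1 then -(q:ℚ) else 0) := fun j _ => if_congr (by omega) rfl rfl
        rw [Finset.sum_congr rfl hc, Finset.sum_ite_eq' (Finset.range s) (q-1) fun _ => -(q:ℚ),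
          if_pos (Finset.mem_range.mpr (by omega))]
    rw [S1, S2]
    have hdvd : (s+1) ∣ k ↔ r = 0 := by
      rw [hr]; exact Nat.dvd_iff_mod_eq_zero
    rcases Nat.eq_zero_or_pos r with h | h
    · rw [if_pos (hdvd.mpr h), if_neg (by omega), if_pos (show 1 ≤ q by rw [hq0 h]; omega), hq0 h]
      ring
    · rw [if_neg (show ¬ (s+1) ∣ k by rw [hdvd]; omega)]
      rcases Nat.lt_or_ge r 2 with h2 | h2
      · have hr1 : r = 1 := by omega
        have hq' : q = 0 := by rw [hq1 h, hr1]
        rw [if_neg (show ¬ 1 ≤ q by omega), if_pos (show 1 ≤ r from h), hr1]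
        norm_num
      · have hq' : q = r - 1 := hq1 h
        rw [if_pos (show 1 ≤ r from h), if_pos (show 1 ≤ q by omega), hq']
        have : ((r-1 : ℕ):ℚ) = (r:ℚ) - 1 := by
          push_cast [Nat.cast_sub (show 1 ≤ r by omega)]; ring
        rw [this]; ring

lemma V_eq_vv {s : ℕ} (hs : 0 < s) (n : ℕ) : V s n = vv s n := by
  induction n using Nat.strong_induction_on with
  | _ n ih =>
    rcases Nat.eq_zero_or_pos n with rfl | hn
    · rw [V_zero, vv_zero]
    · rw [V_rec hn, vv_rec hs hn]
      congr 1
      refine Finset.sum_congr rfl fun j hj => ?_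
      by_cases h : j+1 ≤ n
      · rw [if_pos h, if_pos h, ih _ (by omega)]
      · rw [if_neg h, if_neg h]



theorem lhs_eq (k s : ℕ) (hk : 0 < k) :
    ∑ t ∈ Finset.filter (fun t : Fin s → ℕ => ∑ i, (i.val + 1) * t i = k)
        (Fintype.piFinset fun _ => Finset.range (k + 1)),
      (-1 : ℚ) ^ (∑ i, t i) * k / (∑ i, t i) * Nat.multinomial Finset.univ t
      = -∑ j ∈ Finset.range s, ((j:ℚ)+1) * (if j+1 ≤ k then V s (k-(j+1)) else 0) := by
  have step1 : ∀ t ∈ Finset.filter (fun t : Fin s → ℕ => ∑ i, (i.val + 1) * t i = k)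
        (Fintype.piFinset fun _ => Finset.range (k + 1)),
      (-1 : ℚ) ^ (∑ i, t i) * k / (∑ i, t i) * Nat.multinomial Finset.univ t
      = ∑ i : Fin s, ((i.1:ℚ)+1) * (if 0 < t i then
          (-1:ℚ)^(∑ j, t j) * (Nat.multinomial Finset.univ (Function.update t i (t i - 1)) : ℚ)
         else 0) := by
    intro t ht
    rw [Finset.mem_filter] at ht
    have hm : 1 ≤ ∑ j, t j := msum_pos hk ht.2
    have hm0 : ((∑ j, t j : ℕ) : ℚ) ≠ 0 := by
      exact_mod_cast (show (∑ j, t j : ℕ) ≠ 0 by omega)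
    have hterm : ∀ i ∈ Finset.univ.filter (fun i : Fin s => 0 < t i),
        ((i.1:ℚ)+1) * ((-1:ℚ)^(∑ j, t j)
            * (Nat.multinomial Finset.univ (Function.update t i (t i - 1)) : ℚ))
        = (-1:ℚ)^(∑ j, t j) * (Nat.multinomial Finset.univ t : ℚ) / (∑ j, t j : ℕ)
            * (((i.1+1) * t i : ℕ) : ℚ) := by
      intro i hi
      have hit : 0 < t i := (Finset.mem_filter.mp hi).2
      have hup : ((Nat.multinomial Finset.univ (Function.update t i (t i - 1)) : ℕ) : ℚ)
          = (Nat.multinomial Finset.univ t : ℚ) * (t i : ℚ) / (∑ j, t j : ℕ) := by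
        rw [eq_div_iff hm0]
        exact_mod_cast lemB t i hit
      rw [hup]
      push_cast
      ring
    calc (-1 : ℚ) ^ (∑ i, t i) * k / (∑ i, t i) * Nat.multinomial Finset.univ t
        = (-1:ℚ)^(∑ j, t j) * (Nat.multinomial Finset.univ t : ℚ) / (∑ j, t j : ℕ) * (k:ℚ) := by
          ring
      _ = (-1:ℚ)^(∑ j, t j) * (Nat.multinomial Finset.univ t : ℚ) / (∑ j, t j : ℕ)
          * (((∑ i, (i.1+1) * t i : ℕ)) : ℚ) := by rw [ht.2]
      _ = ∑ i ∈ Finset.univ.filter (fun i : Fin s => 0 < t i),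
            ((i.1:ℚ)+1) * ((-1:ℚ)^(∑ j, t j)
              * (Nat.multinomial Finset.univ (Function.update t i (t i - 1)) : ℚ)) := by
          rw [Finset.sum_congr rfl hterm, ← Finset.mul_sum, ← Nat.cast_sum]
          congr 2
          exact (Finset.sum_filter_of_ne (fun i _ h =>
            Nat.pos_of_ne_zero (by intro h0; rw [h0, mul_zero] at h; exact h rfl))).symm
      _ = ∑ i : Fin s, ((i.1:ℚ)+1) * (if 0 < t i then
            (-1:ℚ)^(∑ j, t j)
              * (Nat.multinomial Finset.univ (Function.update t i (t i - 1)) : ℚ) else 0) := by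
          rw [Finset.sum_filter]
          refine Finset.sum_congr rfl fun i _ => ?_
          by_cases h : 0 < t i
          · rw [if_pos h, if_pos h]
          · rw [if_neg h, if_neg h, mul_zero]
  rw [Finset.sum_congr rfl step1, Finset.sum_comm]
  have step2 : ∀ i : Fin s,
      ∑ t ∈ Finset.filter (fun t : Fin s → ℕ => ∑ i, (i.val + 1) * t i = k)
        (Fintype.piFinset fun _ => Finset.range (k + 1)),
        ((i.1:ℚ)+1) * (if 0 < t i then
          (-1:ℚ)^(∑ j, t j) * (Nat.multinomial Finset.univ (Function.update t i (t i - 1)) : ℚ)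
         else 0)
      = ((i.1:ℚ)+1) * -(if i.1+1 ≤ k then V s (k-(i.1+1)) else 0) := by
    intro i
    rw [← Finset.mul_sum, lemE i k]
  rw [Finset.sum_congr rfl (fun i _ => step2 i)]
  have h3 : ∀ i : Fin s, ((i.1:ℚ)+1) * -(if i.1+1 ≤ k then V s (k-(i.1+1)) else 0)
      = -(((i.1:ℚ)+1) * (if i.1+1 ≤ k then V s (k-(i.1+1)) else 0)) := fun i => by ring
  rw [Finset.sum_congr rfl (fun i _ => h3 i), Finset.sum_neg_distrib]
  congr 1
  exact Fin.sum_univ_eq_sum_range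
    (fun j => ((j:ℚ)+1) * (if j+1 ≤ k then V s (k-(j+1)) else 0)) s

/-- `∑_{t₁+2t₂+⋯+s tₛ = k} ((-1)^{t₁+⋯+tₛ} k / (t₁+⋯+tₛ)) (t₁+⋯+tₛ choose t₁,…,tₛ)`
equals `s` if `(s+1) ∣ k` and `-1` otherwise.  The sum is over all tuples
`(t₁,…,tₛ)` of nonnegative integers with `∑ i tᵢ = k`; since `k ≥ 1`, each such
`tᵢ` is at most `k`, so the sum is realised over `(Finset.range (k+1))^s`. -/
theorem stmt8 (k s : ℕ) (hk : 0 < k) (hs : 0 < s) :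
    ∑ t ∈ Finset.filter (fun t : Fin s → ℕ => ∑ i, (i.val + 1) * t i = k)
        (Fintype.piFinset fun _ => Finset.range (k + 1)),
      (-1 : ℚ) ^ (∑ i, t i) * k / (∑ i, t i) * Nat.multinomial Finset.univ t =
      if (s + 1) ∣ k then (s : ℚ) else -1 := by
  rw [lhs_eq k s hk]
  have h1 : ∀ j ∈ Finset.range s, ((j:ℚ)+1) * (if j+1 ≤ k then V s (k-(j+1)) else 0)
      = ((j:ℚ)+1) * (if j+1 ≤ k then vv s (k-(j+1)) else 0) := by
    intro j _
    by_cases h : j+1 ≤ k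
    · rw [if_pos h, if_pos h, V_eq_vv hs]
    · rw [if_neg h, if_neg h]
  rw [Finset.sum_congr rfl h1, final_sum hs hk]
end

section
/- For positive integers k, n, s: H_k^{(s)}(x_1,...,x_n) = (-1)^k \sum_{\lambda \vdash k, \ell(\lambda) \le s} m_{\lambda}(\omega_{1,s+1},...,\omega_{s,s+1}) \, h_{\lambda}(x_1,...,x_n), where the sum is over partitions \lambda of k with at most s parts, h_{\lambda} = \prod_i h_{\lambda_i}, and \omega_{j,s+1} = e^{2\pi i j/(s+1)}. -/
/-- The complete homogeneous symmetric function `h_k(x₁,…,xₙ)`, as the coefficient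
of `t^k` in `∏ i (1 - xᵢ t)⁻¹`. -/
noncomputable def hg (n : ℕ) (x : Fin n → ℂ) (k : ℕ) : ℂ :=
  PowerSeries.coeff k (∏ i, (1 - PowerSeries.C (x i) * PowerSeries.X)⁻¹)

/-- The evaluation of the monomial symmetric function `m_λ` (for `λ ⊢ k`) at
`m` variables `y₁,…,y_m`: the sum of all distinct monomials `y₁^{a₁} ⋯ y_m^{a_m}`
whose multiset of nonzero exponents equals the multiset of parts of `λ`. -/
noncomputable def msym (m : ℕ) (y : Fin m → ℂ) (k : ℕ) (lam : Nat.Partition k) : ℂ :=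
  ∑ f ∈ Finset.filter
      (fun f : Fin m → ℕ => Multiset.filter (fun a => a ≠ 0) (Finset.univ.val.map f) = lam.parts)
      (Fintype.piFinset fun _ => Finset.range (k + 1)),
    ∏ i, y i ^ f i

/-- `λ`-indexed product of complete homogeneous symmetric functions `h_λ = ∏ h_{λᵢ}`. -/
noncomputable def hprod (n : ℕ) (x : Fin n → ℂ) (k : ℕ) (lam : Nat.Partition k) : ℂ :=
  (lam.parts.map (hg n x)).prod

open PowerSeries Finset

section aux

lemma inv_one_sub' (w : ℂ) : (1 - PowerSeries.C w * X)⁻¹ = PowerSeries.mk fun m => w ^ m := by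
  rw [PowerSeries.inv_eq_iff_mul_eq_one (by simp)]
  ext n
  rw [mul_sub, mul_one]
  cases n with
  | zero => simp
  | succ n =>
    rw [show (PowerSeries.mk fun m => w ^ m) * (PowerSeries.C w * X)
        = (PowerSeries.mk fun m => w ^ m) * PowerSeries.C w * X by ring]
    simp [PowerSeries.coeff_succ_mul_X, pow_succ, mul_comm]

lemma prod_inv_eq' {ι : Type*} (S : Finset ι) (f : ι → PowerSeries ℂ)
    (h : ∀ i ∈ S, PowerSeries.constantCoeff (f i) ≠ 0) :
    (∏ i ∈ S, f i)⁻¹ = ∏ i ∈ S, (f i)⁻¹ := by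
  rw [PowerSeries.inv_eq_iff_mul_eq_one
    (by simp only [map_prod]; exact Finset.prod_ne_zero_iff.mpr h)]
  rw [← Finset.prod_mul_distrib]
  exact Finset.prod_eq_one fun i hi => PowerSeries.inv_mul_cancel _ (h i hi)

lemma coeff_prod_inv_one_sub' {ι : Type*} [Fintype ι] [DecidableEq ι] (y : ι → ℂ) (m : ℕ) :
    PowerSeries.coeff m (∏ i, (1 - PowerSeries.C (y i) * X)⁻¹) =
      ∑ l ∈ Finset.finsuppAntidiag Finset.univ m, ∏ i, y i ^ l i := by
  simp only [inv_one_sub', PowerSeries.coeff_prod, PowerSeries.coeff_mk]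

lemma hg_eq' (n : ℕ) (x : Fin n → ℂ) (m : ℕ) :
    hg n x m = ∑ l ∈ Finset.finsuppAntidiag Finset.univ m, ∏ i, x i ^ l i :=
  coeff_prod_inv_one_sub' x m

lemma hg_zero' (n : ℕ) (x : Fin n → ℂ) : hg n x 0 = 1 := by
  rw [hg_eq', Finset.finsuppAntidiag_zero]
  simp

lemma coeff_scaled' (n : ℕ) (x : Fin n → ℂ) (c : ℂ) (m : ℕ) :
    PowerSeries.coeff m (∏ i, (1 - PowerSeries.C (c * x i) * X)⁻¹) =
      c ^ m * hg n x m := by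
  rw [coeff_prod_inv_one_sub', hg, coeff_prod_inv_one_sub', Finset.mul_sum]
  refine Finset.sum_congr rfl fun l hl => ?_
  obtain ⟨hsum, -⟩ := Finset.mem_finsuppAntidiag.mp hl
  calc ∏ i, (c * x i) ^ l i = (∏ i, c ^ l i) * ∏ i, x i ^ l i := by
        rw [← Finset.prod_mul_distrib]; exact Finset.prod_congr rfl fun i _ => mul_pow _ _ _
    _ = c ^ m * ∏ i, x i ^ l i := by rw [Finset.prod_pow_eq_pow_sum, hsum]

lemma poly_fact' (s : ℕ) :
    (∑ j ∈ Finset.range (s + 1), (Polynomial.X : Polynomial ℂ) ^ j) =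
      ∏ i ∈ Finset.range s, (Polynomial.X - Polynomial.C
        (Complex.exp (2 * Real.pi * Complex.I / (s + 1)) ^ (i + 1))) := by
  set ζ := Complex.exp (2 * Real.pi * Complex.I / (s + 1)) with hζdef
  have hζ : IsPrimitiveRoot ζ (s + 1) := by
    have := Complex.isPrimitiveRoot_exp (s + 1) (Nat.succ_ne_zero s)
    simpa using this
  have hroots : Polynomial.roots ((Polynomial.X : Polynomial ℂ) ^ (s + 1) - 1) =
      (Multiset.range (s + 1)).map (fun i => ζ ^ i) := by
    have h := hζ.nthRoots_eq (α := (1 : ℂ)) (a := (1 : ℂ)) (one_pow _)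
    simpa [Polynomial.nthRoots, mul_one] using h
  have hm : ((Polynomial.X : Polynomial ℂ) ^ (s + 1) - 1).Monic := by
    have := Polynomial.monic_X_pow_sub_C (1 : ℂ) (Nat.succ_ne_zero s)
    simpa using this
  have hcard : Multiset.card ((Polynomial.X : Polynomial ℂ) ^ (s + 1) - 1).roots =
      ((Polynomial.X : Polynomial ℂ) ^ (s + 1) - 1).natDegree := by
    rw [hroots]
    have hdeg : ((Polynomial.X : Polynomial ℂ) ^ (s + 1) - 1).natDegree = s + 1 := by
      have := Polynomial.natDegree_X_pow_sub_C (n := s + 1) (r := (1 : ℂ))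
      simpa using this
    simp [hdeg]
  have h1 : (Polynomial.X : Polynomial ℂ) ^ (s + 1) - 1 =
      ∏ i ∈ Finset.range (s + 1), (Polynomial.X - Polynomial.C (ζ ^ i)) := by
    have := Polynomial.prod_multiset_X_sub_C_of_monic_of_roots_card_eq hm hcard
    rw [hroots] at this
    rw [← this, Finset.prod, Finset.range_val, Multiset.map_map]
    rfl
  have h2 : (∑ j ∈ Finset.range (s + 1), (Polynomial.X : Polynomial ℂ) ^ j) *
        (Polynomial.X - 1) =
      (∏ i ∈ Finset.range s, (Polynomial.X - Polynomial.C (ζ ^ (i + 1)))) *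
        (Polynomial.X - 1) := by
    rw [geom_sum_mul, h1, Finset.prod_range_succ']
    simp
  have hne : (Polynomial.X - 1 : Polynomial ℂ) ≠ 0 := by
    have := Polynomial.X_sub_C_ne_zero (1 : ℂ)
    simpa using this
  exact mul_right_cancel₀ hne h2

lemma prod_neg_roots' (s : ℕ) :
    ∏ i ∈ Finset.range s, (-(Complex.exp (2 * Real.pi * Complex.I / (s + 1)) ^ (i + 1))) = 1 := by
  have h := congrArg (Polynomial.eval (0 : ℂ)) (poly_fact' s)
  simp only [Polynomial.eval_prod, Polynomial.eval_sub, Polynomial.eval_X, Polynomial.eval_C,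
    Polynomial.eval_finset_sum, Polynomial.eval_pow] at h
  rw [Finset.sum_range_succ'] at h
  simpa using h.symm

lemma ps_fact' (s : ℕ) (a : ℂ) :
    (∑ j ∈ Finset.range (s + 1), PowerSeries.C ((-a) ^ j) * X ^ j) =
      ∏ i ∈ Finset.range s,
        (1 - PowerSeries.C (-a * Complex.exp (2 * Real.pi * Complex.I / (s + 1)) ^ (i + 1)) * X) := by
  set ζ := Complex.exp (2 * Real.pi * Complex.I / (s + 1)) with hζdef
  have hζ : IsPrimitiveRoot ζ (s + 1) := by
    have := Complex.isPrimitiveRoot_exp (s + 1) (Nat.succ_ne_zero s)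
    simpa using this
  have h := congrArg (Polynomial.eval₂ (PowerSeries.C) (PowerSeries.C (-a) * X)) (poly_fact' s)
  rw [Polynomial.eval₂_finset_sum, Polynomial.eval₂_finset_prod] at h
  simp only [Polynomial.eval₂_pow, Polynomial.eval₂_X, Polynomial.eval₂_sub, Polynomial.eval₂_C] at h
  have hL : ∀ j : ℕ, (PowerSeries.C (-a) * X) ^ j = PowerSeries.C ((-a) ^ j) * X ^ j := by
    intro j; rw [mul_pow, map_pow]
  simp only [hL] at h
  rw [h]
  have hfac : ∀ i ∈ Finset.range s,
      PowerSeries.C (-a) * X - PowerSeries.C (ζ ^ (i + 1)) =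
        PowerSeries.C (-(ζ ^ (i + 1))) *
          (1 - PowerSeries.C (-a * ζ ^ ((s - 1 - i) + 1)) * X) := by
    intro i hi
    have hilt : i < s := Finset.mem_range.mp hi
    have hpow : ζ ^ (i + 1) * ζ ^ ((s - 1 - i) + 1) = 1 := by
      rw [← pow_add]
      have : (i + 1) + ((s - 1 - i) + 1) = s + 1 := by omega
      rw [this, hζ.pow_eq_one]
    rw [mul_sub, mul_one, ← mul_assoc, ← map_mul]
    have h2 : -ζ ^ (i + 1) * (-a * ζ ^ (s - 1 - i + 1)) = a := by
      have h3 : -ζ ^ (i + 1) * (-a * ζ ^ (s - 1 - i + 1)) =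
          a * (ζ ^ (i + 1) * ζ ^ (s - 1 - i + 1)) := by ring
      rw [h3, hpow, mul_one]
    rw [h2]
    simp only [map_neg]
    ring
  rw [Finset.prod_congr rfl hfac, Finset.prod_mul_distrib, ← map_prod, prod_neg_roots', map_one,
    one_mul]
  exact Finset.prod_range_reflect (fun i => 1 - PowerSeries.C (-a * ζ ^ (i + 1)) * X) s

/-- totalized "partition of `k` attached to an exponent vector". -/
noncomputable def partOf (k s : ℕ) (f : Fin s → ℕ) : Nat.Partition k :=
  if h : (Finset.univ.val.map f).sum = k then Nat.Partition.ofSums k (Finset.univ.val.map f) h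
  else Nat.Partition.ofSums k {k} (by simp)

lemma hprod_of_filter {k s n : ℕ} (x : Fin n → ℂ) (f : Fin s → ℕ) (lam : Nat.Partition k)
    (h : Multiset.filter (fun a => a ≠ 0) (Finset.univ.val.map f) = lam.parts) :
    hprod n x k lam = ∏ j, hg n x (f j) := by
  rw [hprod, ← h]
  have h1 : (∏ j, hg n x (f j)) = ((Finset.univ.val.map f).map (hg n x)).prod := by
    rw [Multiset.map_map]
    rfl
  rw [h1, ← Multiset.filter_add_not (fun a => a ≠ 0) (Finset.univ.val.map f), Multiset.map_add,
    Multiset.prod_add, Multiset.filter_add_not]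
  have h2 : ((Multiset.filter (fun a => ¬a ≠ 0) (Finset.univ.val.map f)).map (hg n x)).prod
      = 1 := by
    apply Multiset.prod_eq_one
    intro w hw
    obtain ⟨a, ha, rfl⟩ := Multiset.mem_map.mp hw
    have : a = 0 := by simpa using (Multiset.mem_filter.mp ha).2
    rw [this, hg_zero']
  rw [h2, mul_one]

lemma sum_eq_of_filter {k s : ℕ} (f : Fin s → ℕ) (lam : Nat.Partition k)
    (h : Multiset.filter (fun a => a ≠ 0) (Finset.univ.val.map f) = lam.parts) :
    ∑ j, f j = k := by
  rw [Finset.sum_eq_multiset_sum]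
  rw [← Multiset.filter_add_not (fun a => a ≠ 0) (Finset.univ.val.map f), Multiset.sum_add, h,
    lam.parts_sum]
  have h0 : (Multiset.filter (fun a => ¬a ≠ 0) (Finset.univ.val.map f)).sum = 0 :=
    Multiset.sum_eq_zero (fun a ha => by simpa using (Multiset.mem_filter.mp ha).2)
  rw [h0, add_zero]

lemma rhs_eq' (k s n : ℕ) (x : Fin n → ℂ) (y : Fin s → ℂ) :
    (∑ lam ∈ Finset.filter (fun lam : Nat.Partition k => Multiset.card lam.parts ≤ s)
        Finset.univ, msym s y k lam * hprod n x k lam) =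
      ∑ f ∈ (Fintype.piFinset fun _ : Fin s => Finset.range (k + 1)).filter
          (fun f => ∑ j, f j = k),
        (∏ j, y j ^ f j) * ∏ j, hg n x (f j) := by
  simp only [msym, Finset.sum_mul]
  rw [Finset.sum_sigma']
  refine Finset.sum_nbij' (i := fun p => p.2) (j := fun f => ⟨partOf k s f, f⟩)
    ?_ ?_ ?_ ?_ ?_
  · rintro ⟨lam, f⟩ hp
    obtain ⟨hlam, hf⟩ := Finset.mem_sigma.mp hp
    obtain ⟨hfpi, hcond⟩ := Finset.mem_filter.mp hf
    exact Finset.mem_filter.mpr ⟨hfpi, sum_eq_of_filter f lam hcond⟩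
  · intro f hf
    obtain ⟨hfpi, hsum⟩ := Finset.mem_filter.mp hf
    have hms : (Finset.univ.val.map f).sum = k := by
      rw [← Finset.sum_eq_multiset_sum]; exact hsum
    have hparts : (partOf k s f).parts =
        Multiset.filter (fun a => a ≠ 0) (Finset.univ.val.map f) := by
      rw [partOf, dif_pos hms]
      rfl
    refine Finset.mem_sigma.mpr ⟨?_, ?_⟩
    · refine Finset.mem_filter.mpr ⟨Finset.mem_univ _, ?_⟩
      rw [hparts]
      calc Multiset.card (Multiset.filter (fun a => a ≠ 0) (Finset.univ.val.map f))
          ≤ Multiset.card (Finset.univ.val.map f) :=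
            Multiset.card_le_card (Multiset.filter_le _ _)
        _ = s := by simp
    · exact Finset.mem_filter.mpr ⟨hfpi, hparts.symm⟩
  · rintro ⟨lam, f⟩ hp
    obtain ⟨hlam, hf⟩ := Finset.mem_sigma.mp hp
    obtain ⟨hfpi, hcond⟩ := Finset.mem_filter.mp hf
    have hms : (Finset.univ.val.map f).sum = k := by
      rw [← Finset.sum_eq_multiset_sum]; exact sum_eq_of_filter f lam hcond
    have : partOf k s f = lam := by
      apply Nat.Partition.ext
      rw [partOf, dif_pos hms]
      exact hcond
    simp [this]
  · intro f hf
    rfl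
  · rintro ⟨lam, f⟩ hp
    obtain ⟨hlam, hf⟩ := Finset.mem_sigma.mp hp
    obtain ⟨hfpi, hcond⟩ := Finset.mem_filter.mp hf
    rw [hprod_of_filter x f lam hcond]

lemma antidiag_to_B (k s : ℕ) (F : (Fin s → ℕ) → ℂ) :
    (∑ l ∈ Finset.finsuppAntidiag (Finset.univ : Finset (Fin s)) k, F ⇑l) =
      ∑ f ∈ (Fintype.piFinset fun _ : Fin s => Finset.range (k + 1)).filter
          (fun f => ∑ j, f j = k), F f := by
  refine Finset.sum_nbij' (i := fun l => ⇑l)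
    (j := fun f => Finsupp.equivFunOnFinite.symm f) ?_ ?_ ?_ ?_ ?_
  · intro l hl
    obtain ⟨hsum, -⟩ := Finset.mem_finsuppAntidiag.mp hl
    refine Finset.mem_filter.mpr ⟨?_, hsum⟩
    refine Fintype.mem_piFinset.mpr fun j => Finset.mem_range.mpr ?_
    have h1 : l j ≤ ∑ j', l j' := Finset.single_le_sum (fun _ _ => Nat.zero_le _) (Finset.mem_univ j)
    have h2 : (∑ j' : Fin s, l j') = k := hsum
    show l j < k + 1
    omega
  · intro f hf
    obtain ⟨-, hsum⟩ := Finset.mem_filter.mp hf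
    refine Finset.mem_finsuppAntidiag.mpr ⟨?_, Finset.subset_univ _⟩
    simpa using hsum
  · intro l _
    exact Finsupp.equivFunOnFinite_symm_coe l
  · intro f _
    rfl
  · intro l _
    rfl

end aux

theorem stmt9 (k n s : ℕ) (hk : 0 < k) (hn : 0 < n) (hs : 0 < s) (x : Fin n → ℂ) :
    Hg s n x k =
      (-1 : ℂ) ^ k *
        ∑ lam ∈ Finset.filter (fun lam : Nat.Partition k => Multiset.card lam.parts ≤ s)
            Finset.univ,
          msym s (fun j => Complex.exp (2 * Real.pi * Complex.I * (j.val + 1) / (s + 1))) k lam *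
            hprod n x k lam := by
  set ζ := Complex.exp (2 * Real.pi * Complex.I / (s + 1)) with hζdef
  have hy : (fun j : Fin s => Complex.exp (2 * Real.pi * Complex.I * (j.val + 1) / (s + 1)))
      = fun j : Fin s => ζ ^ ((j : ℕ) + 1) := by
    funext j
    rw [hζdef, ← Complex.exp_nat_mul]
    congr 1
    push_cast
    ring
  rw [hy, rhs_eq' k s n x (fun j : Fin s => ζ ^ ((j : ℕ) + 1))]
  -- LHS computation
  have hHgS : HgS s n x =
      ∏ j : Fin s, ∏ i : Fin n, (1 - PowerSeries.C ((-ζ ^ ((j : ℕ) + 1)) * x i) * X)⁻¹ := by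
    rw [HgS]
    have h1 : ∀ i : Fin n,
        (∑ j ∈ Finset.range (s + 1), PowerSeries.C ((-x i) ^ j) * X ^ j)⁻¹ =
          ∏ jr ∈ Finset.range s, (1 - PowerSeries.C ((-ζ ^ (jr + 1)) * x i) * X)⁻¹ := by
      intro i
      rw [ps_fact' s (x i)]
      rw [prod_inv_eq' _ _ (fun jr _ => by simp)]
      have hsc : ∀ jr : ℕ, -x i * ζ ^ (jr + 1) = -ζ ^ (jr + 1) * x i := fun jr => by ring
      simp only [← hζdef, hsc]
    simp only [h1]
    rw [Finset.prod_comm]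
    exact (Fin.prod_univ_eq_prod_range
      (fun jr => ∏ i : Fin n, (1 - PowerSeries.C ((-ζ ^ (jr + 1)) * x i) * X)⁻¹) s).symm
  rw [Hg, hHgS, PowerSeries.coeff_prod]
  have hterm : ∀ l ∈ Finset.finsuppAntidiag (Finset.univ : Finset (Fin s)) k,
      (∏ j : Fin s, PowerSeries.coeff (l j)
          (∏ i : Fin n, (1 - PowerSeries.C ((-ζ ^ ((j : ℕ) + 1)) * x i) * X)⁻¹)) =
        (-1 : ℂ) ^ k * ((∏ j : Fin s, (ζ ^ ((j : ℕ) + 1)) ^ l j) *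
          ∏ j : Fin s, hg n x (l j)) := by
    intro l hl
    obtain ⟨hsum, -⟩ := Finset.mem_finsuppAntidiag.mp hl
    have h2 : ∀ j : Fin s, PowerSeries.coeff (l j)
        (∏ i : Fin n, (1 - PowerSeries.C ((-ζ ^ ((j : ℕ) + 1)) * x i) * X)⁻¹) =
          ((-1 : ℂ) ^ l j * (ζ ^ ((j : ℕ) + 1)) ^ l j) * hg n x (l j) := by
      intro j
      rw [coeff_scaled' n x (-ζ ^ ((j : ℕ) + 1)) (l j)]
      congr 1
      rw [neg_pow]
    simp only [h2]
    rw [Finset.prod_mul_distrib, Finset.prod_mul_distrib, Finset.prod_pow_eq_pow_sum, hsum]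
    ring
  rw [Finset.sum_congr rfl hterm, ← Finset.mul_sum]
  congr 1
  exact antidiag_to_B k s
    (fun f => (∏ j : Fin s, (ζ ^ ((j : ℕ) + 1)) ^ f j) * ∏ j : Fin s, hg n x (f j))
end

section
/- For positive integers k, n, s: E_k^{(s)}(x_1,...,x_n) = (-1)^k \sum_{\lambda \vdash k, \ell(\lambda) \le s} m_{\lambda}(\omega_{1,s+1},...,\omega_{s,s+1}) \, e_{\lambda}(x_1,...,x_n), where \omega_{j,s+1} = e^{2\pi i j/(s+1)}. -/
/-- The elementary symmetric function `e_k(x₁,…,xₙ)`, as the coefficient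
of `t^k` in `∏ i (1 + xᵢ t)`. -/
noncomputable def eg (n : ℕ) (x : Fin n → ℂ) (k : ℕ) : ℂ :=
  PowerSeries.coeff k (∏ i, (1 + PowerSeries.C (x i) * PowerSeries.X))

/-- `λ`-indexed product of elementary symmetric functions `e_λ = ∏ e_{λᵢ}`. -/
noncomputable def eprod (n : ℕ) (x : Fin n → ℂ) (k : ℕ) (lam : Nat.Partition k) : ℂ :=
  (lam.parts.map (eg n x)).prod

section Aux

open Finset

theorem SE10_root_prod_range (n : ℕ) (hn : 0 < n) (ζ : ℂ) (h : IsPrimitiveRoot ζ n) :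
    (Polynomial.X : Polynomial ℂ) ^ n - 1 =
      ∏ j ∈ range n, (Polynomial.X - Polynomial.C (ζ ^ j)) := by
  rw [Polynomial.X_pow_sub_one_eq_prod hn h]
  rw [Finset.prod_eq_multiset_prod, Finset.prod_eq_multiset_prod]
  congr 1
  have hval : (Polynomial.nthRootsFinset n (1 : ℂ)).val = Polynomial.nthRoots n (1 : ℂ) := by
    rw [Polynomial.nthRootsFinset, Multiset.toFinset_val,
      Multiset.dedup_eq_self.2 h.nthRoots_one_nodup]
  rw [hval, h.nthRoots_eq (one_pow n), Finset.range_val, Multiset.map_map]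
  simp [Function.comp]

theorem SE10_monic_id (s : ℕ) (ζ : ℂ) (h : IsPrimitiveRoot ζ (s + 1)) :
    (∑ m ∈ range (s + 1), (Polynomial.X : Polynomial ℂ) ^ m) =
      ∏ j ∈ range s, (Polynomial.X - Polynomial.C (ζ ^ (j + 1))) := by
  have hXone : (Polynomial.X : Polynomial ℂ) - 1 ≠ 0 := by
    intro hc
    have := congrArg (Polynomial.eval 0) hc
    simp at this
  apply mul_right_cancel₀ hXone
  rw [geom_sum_mul, SE10_root_prod_range (s + 1) s.succ_pos ζ h, Finset.prod_range_succ']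
  simp [mul_comm]

theorem SE10_const_one (s : ℕ) (ζ : ℂ) (h : IsPrimitiveRoot ζ (s + 1)) :
    ∏ j ∈ range s, (-ζ ^ (j + 1)) = 1 := by
  have := congrArg (Polynomial.eval 0) (SE10_monic_id s ζ h)
  simpa [Polynomial.eval_prod, Polynomial.eval_finset_sum, zero_pow_eq,
    Finset.sum_ite_eq'] using this.symm

theorem SE10_poly_id (s : ℕ) (ζ : ℂ) (h : IsPrimitiveRoot ζ (s + 1)) :
    (∑ m ∈ range (s + 1), (Polynomial.X : Polynomial ℂ) ^ m) =
      ∏ j ∈ range s, (1 - Polynomial.C (ζ ^ (j + 1)) * Polynomial.X) := by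
  have hnz : ∀ j : ℕ, (ζ : ℂ) ^ (j + 1) ≠ 0 := by
    intro j hc
    exact h.ne_zero (Nat.succ_ne_zero s) (pow_eq_zero_iff (Nat.succ_ne_zero j) |>.mp hc)
  have step1 : ∀ j : ℕ, (Polynomial.X : Polynomial ℂ) - Polynomial.C (ζ ^ (j + 1)) =
      Polynomial.C (-ζ ^ (j + 1)) * (1 - Polynomial.C ((ζ ^ (j + 1))⁻¹) * Polynomial.X) := by
    intro j
    have hc : (-ζ ^ (j + 1)) * ((ζ ^ (j + 1))⁻¹) = -1 := by
      rw [neg_mul, mul_inv_cancel₀ (hnz j)]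
    rw [mul_sub, mul_one, ← mul_assoc, ← Polynomial.C_mul, hc]
    simp only [map_neg, map_one, neg_mul, one_mul, sub_neg_eq_add]
    ring
  rw [SE10_monic_id s ζ h]
  calc ∏ j ∈ range s, ((Polynomial.X : Polynomial ℂ) - Polynomial.C (ζ ^ (j + 1)))
      = ∏ j ∈ range s, (Polynomial.C (-ζ ^ (j + 1)) *
          (1 - Polynomial.C ((ζ ^ (j + 1))⁻¹) * Polynomial.X)) :=
        Finset.prod_congr rfl fun j _ => step1 j
    _ = (∏ j ∈ range s, Polynomial.C (-ζ ^ (j + 1))) *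
          ∏ j ∈ range s, (1 - Polynomial.C ((ζ ^ (j + 1))⁻¹) * Polynomial.X) :=
        Finset.prod_mul_distrib
    _ = ∏ j ∈ range s, (1 - Polynomial.C ((ζ ^ (j + 1))⁻¹) * Polynomial.X) := by
        rw [← map_prod, SE10_const_one s ζ h, map_one, one_mul]
    _ = ∏ j ∈ range s, (1 - Polynomial.C (ζ ^ (j + 1)) * Polynomial.X) := by
        rw [← Finset.prod_range_reflect]
        apply Finset.prod_congr rfl
        intro j hj
        rw [Finset.mem_range] at hj
        have h1 : s - 1 - j + 1 = s - j := by omega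
        have hmul : ζ ^ (s - j) * ζ ^ (j + 1) = 1 := by
          rw [← pow_add]
          have h2 : s - j + (j + 1) = s + 1 := by omega
          rw [h2, h.pow_eq_one]
        rw [h1, inv_eq_of_mul_eq_one_right hmul]

theorem SE10_ps_id (s : ℕ) (ζ : ℂ) (h : IsPrimitiveRoot ζ (s + 1)) (a : ℂ) :
    (∑ m ∈ range (s + 1), PowerSeries.C (a ^ m) * PowerSeries.X ^ m) =
      ∏ j ∈ range s, (1 - PowerSeries.C (ζ ^ (j + 1) * a) * PowerSeries.X) := by
  have := congrArg (Polynomial.aeval (PowerSeries.C a * PowerSeries.X)) (SE10_poly_id s ζ h)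
  simpa [map_sum, map_prod, map_sub, map_pow, map_mul, Polynomial.aeval_X, Polynomial.aeval_C,
    ← PowerSeries.C_eq_algebraMap, mul_pow, map_one, mul_assoc] using this

theorem SE10_coeff_linfac (c x : ℂ) (j : ℕ) :
    PowerSeries.coeff j (1 + PowerSeries.C (c * x) * PowerSeries.X) =
      c ^ j * PowerSeries.coeff j (1 + PowerSeries.C x * PowerSeries.X) := by
  match j with
  | 0 => simp
  | 1 => simp [PowerSeries.coeff_one]
  | (j + 2) =>
    simp [PowerSeries.coeff_one, PowerSeries.coeff_C_mul, PowerSeries.coeff_X]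

theorem SE10_coeff_scaled (n : ℕ) (x : Fin n → ℂ) (a : ℂ) (m : ℕ) :
    PowerSeries.coeff m (∏ i, (1 + PowerSeries.C (a * x i) * PowerSeries.X)) =
      a ^ m * eg n x m := by
  rw [eg, PowerSeries.coeff_prod, PowerSeries.coeff_prod, Finset.mul_sum]
  apply Finset.sum_congr rfl
  intro l hl
  rw [Finset.mem_finsuppAntidiag] at hl
  calc ∏ i, PowerSeries.coeff (l i) (1 + PowerSeries.C (a * x i) * PowerSeries.X)
      = ∏ i, (a ^ (l i) *
          PowerSeries.coeff (l i) (1 + PowerSeries.C (x i) * PowerSeries.X)) :=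
        Finset.prod_congr rfl fun i _ => SE10_coeff_linfac a (x i) (l i)
    _ = (∏ i, a ^ (l i)) *
          ∏ i, PowerSeries.coeff (l i) (1 + PowerSeries.C (x i) * PowerSeries.X) :=
        Finset.prod_mul_distrib
    _ = a ^ m * ∏ i, PowerSeries.coeff (l i) (1 + PowerSeries.C (x i) * PowerSeries.X) := by
        rw [Finset.prod_pow_eq_pow_sum, hl.1]

theorem SE10_regroup (s k : ℕ) (y : Fin s → ℂ) (g : ℕ → ℂ) (hg : g 0 = 1) :
    ∑ lam ∈ Finset.filter (fun lam : Nat.Partition k => Multiset.card lam.parts ≤ s)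
        Finset.univ,
      (∑ f ∈ Finset.filter
          (fun f : Fin s → ℕ =>
            Multiset.filter (fun a => a ≠ 0) (Finset.univ.val.map f) = lam.parts)
          (Fintype.piFinset fun _ => Finset.range (k + 1)),
        ∏ j, y j ^ f j) * (lam.parts.map g).prod
    = ∑ l ∈ Finset.finsuppAntidiag (Finset.univ : Finset (Fin s)) k,
        ((∏ j, y j ^ l j) * ∏ j, g (l j)) := by
  classical
  simp_rw [Finset.sum_mul]
  rw [Finset.sum_sigma']
  refine Finset.sum_bij' (fun p _ => Finsupp.equivFunOnFinite.symm p.2)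
    (fun l hl => ⟨⟨Multiset.filter (fun a => a ≠ 0) (Finset.univ.val.map ⇑l), ?_, ?_⟩, ⇑l⟩)
    ?_ ?_ ?_ ?_ ?_
  · intro i hi
    exact Nat.pos_of_ne_zero (Multiset.mem_filter.mp hi).2
  · rw [Finset.mem_finsuppAntidiag] at hl
    have hsplit := Multiset.filter_add_not (fun a => a ≠ 0) (Finset.univ.val.map ⇑l)
    have h0 : (Multiset.filter (fun a => ¬ a ≠ 0) (Finset.univ.val.map ⇑l)).sum = 0 :=
      Multiset.sum_eq_zero (fun a ha => by simpa using (Multiset.of_mem_filter ha))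
    have := congrArg Multiset.sum hsplit
    rw [Multiset.sum_add, h0, add_zero] at this
    rw [this]
    exact hl.1
  · rintro ⟨lam, f⟩ hp
    rw [Finset.mem_sigma] at hp
    obtain ⟨hlam, hf⟩ := hp
    rw [Finset.mem_filter] at hf
    rw [Finset.mem_finsuppAntidiag]
    constructor
    · have hsplit := Multiset.filter_add_not (fun a => a ≠ 0) (Finset.univ.val.map f)
      have h0 : (Multiset.filter (fun a => ¬ a ≠ 0) (Finset.univ.val.map f)).sum = 0 :=
        Multiset.sum_eq_zero (fun a ha => by simpa using (Multiset.of_mem_filter ha))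
      have := congrArg Multiset.sum hsplit
      rw [Multiset.sum_add, h0, add_zero, hf.2, lam.parts_sum] at this
      exact this.symm
    · exact Finset.subset_univ _
  · intro l hl
    rw [Finset.mem_finsuppAntidiag] at hl
    rw [Finset.mem_sigma]
    constructor
    · rw [Finset.mem_filter]
      refine ⟨Finset.mem_univ _, ?_⟩
      calc Multiset.card (Multiset.filter (fun a => a ≠ 0) (Finset.univ.val.map ⇑l))
          ≤ Multiset.card (Finset.univ.val.map ⇑l) :=
            Multiset.card_le_card (Multiset.filter_le _ _)
        _ = s := by simp
    · rw [Finset.mem_filter]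
      refine ⟨?_, rfl⟩
      rw [Fintype.mem_piFinset]
      intro j
      rw [Finset.mem_range, Nat.lt_succ_iff]
      calc l j ≤ ∑ i, l i :=
            Finset.single_le_sum (fun i _ => Nat.zero_le _) (Finset.mem_univ j)
        _ = k := hl.1
  · rintro ⟨lam, f⟩ hp
    rw [Finset.mem_sigma] at hp
    obtain ⟨hlam, hf⟩ := hp
    rw [Finset.mem_filter] at hf
    have hcoe : ⇑(Finsupp.equivFunOnFinite.symm f) = f := rfl
    refine Sigma.ext (Nat.Partition.ext ?_) (heq_of_eq hcoe)
    simpa using hf.2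
  · intro l hl
    exact Finsupp.equivFunOnFinite.symm_apply_apply l
  · rintro ⟨lam, f⟩ hp
    rw [Finset.mem_sigma] at hp
    obtain ⟨hlam, hf⟩ := hp
    rw [Finset.mem_filter] at hf
    have hcoe : ⇑(Finsupp.equivFunOnFinite.symm f) = f := rfl
    simp only [hcoe]
    congr 1
    have h1 : ∏ j, g (f j) = ((Finset.univ.val.map f).map g).prod := by
      simp [Finset.prod, Multiset.map_map, Function.comp_def]
    rw [h1, ← hf.2]
    have hsplit := Multiset.filter_add_not (fun a => a ≠ 0) (Finset.univ.val.map f)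
    conv_rhs => rw [← hsplit]
    rw [Multiset.map_add, Multiset.prod_add]
    have h0 : ((Multiset.filter (fun a => ¬ a ≠ 0) (Finset.univ.val.map f)).map g).prod = 1 := by
      apply Multiset.prod_eq_one
      intro a ha
      rw [Multiset.mem_map] at ha
      obtain ⟨b, hb, rfl⟩ := ha
      have : b = 0 := by simpa using Multiset.of_mem_filter hb
      rw [this, hg]
    rw [h0, mul_one]

end Aux

theorem stmt10 (k n s : ℕ) (hk : 0 < k) (hn : 0 < n) (hs : 0 < s) (x : Fin n → ℂ) :
    Eg s n x k =
      (-1 : ℂ) ^ k *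
        ∑ lam ∈ Finset.filter (fun lam : Nat.Partition k => Multiset.card lam.parts ≤ s)
            Finset.univ,
          msym s (fun j => Complex.exp (2 * Real.pi * Complex.I * (j.val + 1) / (s + 1))) k lam *
            eprod n x k lam := by
  classical
  set ζ : ℂ := Complex.exp (2 * Real.pi * Complex.I / ((s : ℂ) + 1)) with hζdef
  have hζ : IsPrimitiveRoot ζ (s + 1) := by
    have h := Complex.isPrimitiveRoot_exp (s + 1) (Nat.succ_ne_zero s)
    have : ((s + 1 : ℕ) : ℂ) = (s : ℂ) + 1 := by push_cast; ring
    rw [this] at h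
    exact h
  have hy : ∀ j : Fin s,
      Complex.exp (2 * Real.pi * Complex.I * ((j : ℕ) + 1) / ((s : ℂ) + 1)) = ζ ^ (j.val + 1) := by
    intro j
    rw [hζdef, ← Complex.exp_nat_mul]
    congr 1
    push_cast
    ring
  have hg : eg n x 0 = 1 := by
    simp [eg, PowerSeries.coeff_zero_eq_constantCoeff, map_prod]
  have hA : EgS s n x = ∏ j : Fin s, ∏ i,
      (1 + PowerSeries.C ((-ζ ^ (j.val + 1)) * x i) * PowerSeries.X) := by
    rw [EgS]
    calc (∏ i, ∑ m ∈ Finset.range (s + 1), PowerSeries.C (x i ^ m) * PowerSeries.X ^ m)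
        = ∏ i, ∏ jj ∈ Finset.range s,
            (1 - PowerSeries.C (ζ ^ (jj + 1) * x i) * PowerSeries.X) :=
          Finset.prod_congr rfl fun i _ => SE10_ps_id s ζ hζ (x i)
      _ = ∏ jj ∈ Finset.range s, ∏ i,
            (1 - PowerSeries.C (ζ ^ (jj + 1) * x i) * PowerSeries.X) := Finset.prod_comm
      _ = ∏ j : Fin s, ∏ i,
            (1 - PowerSeries.C (ζ ^ (j.val + 1) * x i) * PowerSeries.X) := by
          rw [← Fin.prod_univ_eq_prod_range
            (fun jj => ∏ i, (1 - PowerSeries.C (ζ ^ (jj + 1) * x i) * PowerSeries.X)) s]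
      _ = ∏ j : Fin s, ∏ i,
            (1 + PowerSeries.C ((-ζ ^ (j.val + 1)) * x i) * PowerSeries.X) := by
          apply Finset.prod_congr rfl
          intro j _
          apply Finset.prod_congr rfl
          intro i _
          rw [neg_mul, map_neg, neg_mul, ← sub_eq_add_neg]
  have hB : Eg s n x k = ∑ l ∈ Finset.finsuppAntidiag (Finset.univ : Finset (Fin s)) k,
      ((-1 : ℂ) ^ k * ((∏ j, (ζ ^ (j.val + 1)) ^ l j) * ∏ j, eg n x (l j))) := by
    rw [Eg, hA, PowerSeries.coeff_prod]
    apply Finset.sum_congr rfl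
    intro l hl
    rw [Finset.mem_finsuppAntidiag] at hl
    calc ∏ j, PowerSeries.coeff (l j)
          (∏ i, (1 + PowerSeries.C ((-ζ ^ (j.val + 1)) * x i) * PowerSeries.X))
        = ∏ j, ((-ζ ^ (j.val + 1)) ^ (l j) * eg n x (l j)) :=
          Finset.prod_congr rfl fun j _ => SE10_coeff_scaled n x _ (l j)
      _ = (∏ j, (-ζ ^ (j.val + 1)) ^ (l j)) * ∏ j, eg n x (l j) := Finset.prod_mul_distrib
      _ = ((∏ j, (-1 : ℂ) ^ (l j)) * ∏ j, (ζ ^ (j.val + 1)) ^ (l j)) * ∏ j, eg n x (l j) := by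
          congr 1
          rw [← Finset.prod_mul_distrib]
          apply Finset.prod_congr rfl
          intro j _
          rw [← neg_one_mul, mul_pow]
      _ = ((-1 : ℂ) ^ k * ((∏ j, (ζ ^ (j.val + 1)) ^ l j) * ∏ j, eg n x (l j))) := by
          rw [Finset.prod_pow_eq_pow_sum, hl.1, mul_assoc]
  rw [hB, ← Finset.mul_sum,
    ← SE10_regroup s k (fun j => ζ ^ (j.val + 1)) (eg n x) hg]
  simp only [msym, eprod, hy]
end

section
/- For positive integers k, n, s: H_k^{(s-1)}(x_1,...,x_n) = \sum_{j=0}^{\lfloor k/s \rfloor} (-1)^{sj} h_j(x_1^s,...,x_n^s) \, e_{k-sj}(x_1,...,x_n). -/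
open PowerSeries Finset

noncomputable def pexp (s : ℕ) (f : PowerSeries ℂ) : PowerSeries ℂ :=
  PowerSeries.mk fun m => if s ∣ m then PowerSeries.coeff (m / s) f else 0

lemma coeff_pexp (s : ℕ) (f : PowerSeries ℂ) (m : ℕ) :
    PowerSeries.coeff m (pexp s f) = if s ∣ m then PowerSeries.coeff (m / s) f else 0 :=
  PowerSeries.coeff_mk _ _


lemma pexp_one (s : ℕ) : pexp s 1 = 1 := by
  ext m
  simp only [coeff_pexp, PowerSeries.coeff_one]
  rcases eq_or_ne m 0 with rfl | hm
  · simp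
  · rw [if_neg hm]
    split_ifs with h1 h2
    · exfalso
      rcases Nat.eq_zero_or_pos s with rfl | hs
      · exact hm (Nat.eq_zero_of_zero_dvd h1)
      · have := Nat.le_of_dvd (Nat.pos_of_ne_zero hm) h1
        have := Nat.div_eq_zero_iff.mp h2
        omega
    · rfl
    · rfl

lemma pexp_mul {s : ℕ} (hs : 0 < s) (f g : PowerSeries ℂ) :
    pexp s (f * g) = pexp s f * pexp s g := by
  ext m
  rw [coeff_pexp]
  conv_rhs => rw [PowerSeries.coeff_mul]
  simp only [coeff_pexp]
  by_cases hm : s ∣ m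
  · rcases hm with ⟨c, rfl⟩
    rw [if_pos ⟨c, rfl⟩, Nat.mul_div_cancel_left _ hs, PowerSeries.coeff_mul]
    symm
    have hsub : (antidiagonal c).image (fun q : ℕ × ℕ => (s * q.1, s * q.2)) ⊆
        antidiagonal (s * c) := by
      intro p hp
      simp only [Finset.mem_image, Finset.HasAntidiagonal.mem_antidiagonal] at hp ⊢
      obtain ⟨q, hq, rfl⟩ := hp
      rw [← hq, Nat.mul_add]
    have hvan : ∀ p ∈ antidiagonal (s * c),
        p ∉ (antidiagonal c).image (fun q : ℕ × ℕ => (s * q.1, s * q.2)) →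
        ((if s ∣ p.1 then PowerSeries.coeff (p.1 / s) f else 0) *
          if s ∣ p.2 then PowerSeries.coeff (p.2 / s) g else 0) = 0 := by
      intro p hp hnot
      rw [Finset.HasAntidiagonal.mem_antidiagonal] at hp
      by_cases h1 : s ∣ p.1
      · exfalso
        apply hnot
        have h2 : s ∣ p.2 := by
          have hd : s ∣ s * c - p.1 := Nat.dvd_sub ⟨c, rfl⟩ h1
          have he : s * c - p.1 = p.2 := by omega
          rwa [he] at hd
        simp only [Finset.mem_image, Finset.HasAntidiagonal.mem_antidiagonal]
        refine ⟨(p.1 / s, p.2 / s), ?_, ?_⟩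
        · rcases h1 with ⟨u, hu⟩
          rcases h2 with ⟨v, hv⟩
          simp only [hu, hv, Nat.mul_div_cancel_left _ hs]
          exact Nat.eq_of_mul_eq_mul_left hs (by rw [Nat.mul_add]; omega)
        · simp only [Nat.mul_div_cancel' h1, Nat.mul_div_cancel' h2]
      · rw [if_neg h1, zero_mul]
    rw [← Finset.sum_subset hsub hvan, Finset.sum_image (by
      intro a _ b _ hab
      have h1 : s * a.1 = s * b.1 := congrArg Prod.fst hab
      have h2 : s * a.2 = s * b.2 := congrArg Prod.snd hab
      have := Nat.eq_of_mul_eq_mul_left hs h1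
      have := Nat.eq_of_mul_eq_mul_left hs h2
      exact Prod.ext ‹a.1 = b.1› ‹a.2 = b.2›)]
    refine Finset.sum_congr rfl fun q hq => ?_
    simp [Nat.mul_div_cancel_left _ hs]
  · rw [if_neg hm]
    symm
    refine Finset.sum_eq_zero fun p hp => ?_
    rw [Finset.HasAntidiagonal.mem_antidiagonal] at hp
    by_cases h1 : s ∣ p.1
    · by_cases h2 : s ∣ p.2
      · exact absurd (hp ▸ dvd_add h1 h2) hm
      · rw [if_neg h2, mul_zero]
    · rw [if_neg h1, zero_mul]

lemma constantCoeff_pexp (s : ℕ) (f : PowerSeries ℂ) :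
    PowerSeries.constantCoeff (pexp s f) = PowerSeries.constantCoeff f := by
  rw [← PowerSeries.coeff_zero_eq_constantCoeff_apply, coeff_pexp,
    ← PowerSeries.coeff_zero_eq_constantCoeff_apply]
  simp

lemma pexp_inv {s : ℕ} (hs : 0 < s) (f : PowerSeries ℂ)
    (hf : PowerSeries.constantCoeff f ≠ 0) : pexp s f⁻¹ = (pexp s f)⁻¹ := by
  rw [PowerSeries.eq_inv_iff_mul_eq_one (by rwa [constantCoeff_pexp]),
    ← pexp_mul hs, PowerSeries.inv_mul_cancel f hf, pexp_one]

lemma rescale_inv (c : ℂ) (f : PowerSeries ℂ)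
    (hf : PowerSeries.constantCoeff f ≠ 0) :
    PowerSeries.rescale c f⁻¹ = (PowerSeries.rescale c f)⁻¹ := by
  rw [PowerSeries.eq_inv_iff_mul_eq_one, ← map_mul, PowerSeries.inv_mul_cancel f hf, map_one]
  rw [← PowerSeries.coeff_zero_eq_constantCoeff, PowerSeries.coeff_rescale]
  simpa using hf

lemma pexp_prod {s : ℕ} (hs : 0 < s) {ι : Type*} (t : Finset ι) (f : ι → PowerSeries ℂ) :
    pexp s (∏ i ∈ t, f i) = ∏ i ∈ t, pexp s (f i) := by
  classical
  induction t using Finset.induction_on with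
  | empty => simpa using pexp_one s
  | insert _ _ h ih => rw [Finset.prod_insert h, Finset.prod_insert h, pexp_mul hs, ih]

lemma pexp_linear {s : ℕ} (hs : 0 < s) (a : ℂ) :
    pexp s (1 - PowerSeries.C a * PowerSeries.X) =
      1 - PowerSeries.C a * PowerSeries.X ^ s := by
  ext m
  rw [coeff_pexp]
  simp only [map_sub, PowerSeries.coeff_one, PowerSeries.coeff_C_mul, PowerSeries.coeff_X,
    PowerSeries.coeff_X_pow]
  by_cases hm : s ∣ m
  · rw [if_pos hm]
    rcases hm with ⟨u, rfl⟩
    rw [Nat.mul_div_cancel_left _ hs]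
    rcases eq_or_ne u 0 with rfl | hu
    · simp [hs.ne]
    · rcases eq_or_ne u 1 with rfl | hu1
      · simp [hs.ne']
      · have h2 : s * u ≠ 0 := Nat.mul_ne_zero hs.ne' hu
        have h3 : s * u ≠ s := by
          intro h
          exact hu1 (Nat.eq_of_mul_eq_mul_left hs (by rw [h, Nat.mul_one]))
        simp [hu, hu1, h2, h3]
  · have h0 : m ≠ 0 := by rintro rfl; exact hm (dvd_zero s)
    have h1 : m ≠ s := by rintro rfl; exact hm dvd_rfl
    simp [hm, h0, h1]

lemma rescale_linear (c a : ℂ) :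
    PowerSeries.rescale c (1 - PowerSeries.C a * PowerSeries.X) =
      1 - PowerSeries.C (c * a) * PowerSeries.X := by
  ext n
  simp only [PowerSeries.coeff_rescale, map_sub, PowerSeries.coeff_one,
    PowerSeries.coeff_C_mul, PowerSeries.coeff_X]
  rcases eq_or_ne n 0 with rfl | h0
  · simp
  · rcases eq_or_ne n 1 with rfl | h1
    · simp [mul_comm]
    · simp [h0, h1]

lemma factor {s : ℕ} (hs : 0 < s) (a : ℂ) :
    (∑ j ∈ Finset.range (s - 1 + 1),
        PowerSeries.C ((-a) ^ j) * PowerSeries.X ^ j)⁻¹ =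
      (1 + PowerSeries.C a * PowerSeries.X) *
        (1 - PowerSeries.C ((-a) ^ s) * PowerSeries.X ^ s)⁻¹ := by
  have hr : -(PowerSeries.C a * PowerSeries.X) = PowerSeries.C (-a) * PowerSeries.X := by
    rw [map_neg, neg_mul]
  have hsum : ∑ j ∈ Finset.range (s - 1 + 1),
      PowerSeries.C ((-a) ^ j) * PowerSeries.X ^ j
      = ∑ j ∈ Finset.range s, (-(PowerSeries.C a * PowerSeries.X)) ^ j := by
    rw [Nat.sub_add_cancel hs]
    refine Finset.sum_congr rfl fun j _ => ?_
    rw [hr, mul_pow, map_pow]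
  have hrs : (-(PowerSeries.C a * PowerSeries.X)) ^ s
      = PowerSeries.C ((-a) ^ s) * PowerSeries.X ^ s := by
    rw [hr, mul_pow, map_pow]
  have hkey : (∑ j ∈ Finset.range (s - 1 + 1),
      PowerSeries.C ((-a) ^ j) * PowerSeries.X ^ j) *
      (1 + PowerSeries.C a * PowerSeries.X)
      = 1 - PowerSeries.C ((-a) ^ s) * PowerSeries.X ^ s := by
    have h1 : (1 + PowerSeries.C a * PowerSeries.X)
        = -((-(PowerSeries.C a * PowerSeries.X)) - 1) := by ring
    rw [hsum, h1, mul_neg, geom_sum_mul, neg_sub, hrs]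
  have hc2 : PowerSeries.constantCoeff
      (1 - PowerSeries.C ((-a) ^ s) * PowerSeries.X ^ s) = 1 := by
    simp [hs.ne']
  have hcS : PowerSeries.constantCoeff (∑ j ∈ Finset.range (s - 1 + 1),
      PowerSeries.C ((-a) ^ j) * PowerSeries.X ^ j) = 1 := by
    rw [map_sum]
    rw [Finset.sum_eq_single 0]
    · simp
    · intro j _ hj
      simp [PowerSeries.constantCoeff_X, zero_pow hj, map_mul, map_pow]
    · intro h
      exact absurd (Finset.mem_range.mpr (Nat.succ_pos _)) h
  rw [PowerSeries.inv_eq_iff_mul_eq_one (by rw [hcS]; exact one_ne_zero)]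
  calc (1 + PowerSeries.C a * PowerSeries.X) *
        (1 - PowerSeries.C ((-a) ^ s) * PowerSeries.X ^ s)⁻¹ *
        (∑ j ∈ Finset.range (s - 1 + 1), PowerSeries.C ((-a) ^ j) * PowerSeries.X ^ j)
      = (1 - PowerSeries.C ((-a) ^ s) * PowerSeries.X ^ s)⁻¹ *
        ((∑ j ∈ Finset.range (s - 1 + 1), PowerSeries.C ((-a) ^ j) * PowerSeries.X ^ j) *
          (1 + PowerSeries.C a * PowerSeries.X)) := by ring
    _ = 1 := by
        rw [hkey, PowerSeries.inv_mul_cancel _ (by rw [hc2]; exact one_ne_zero)]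

/-- `H_k^{(s-1)}(x₁,…,xₙ) = ∑_{j=0}^{⌊k/s⌋} (-1)^{sj} h_j(x₁^s,…,xₙ^s) e_{k-sj}(x₁,…,xₙ)`. -/
theorem stmt11 (k n s : ℕ) (hk : 0 < k) (hn : 0 < n) (hs : 0 < s) (x : Fin n → ℂ) :
    Hg (s - 1) n x k =
      ∑ j ∈ Finset.range (k / s + 1),
        (-1 : ℂ) ^ (s * j) * hg n (fun i => x i ^ s) j * eg n x (k - s * j) := by
  classical
  have hHgS : HgS (s - 1) n x =
      pexp s (PowerSeries.rescale ((-1) ^ s)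
          (∏ i, (1 - PowerSeries.C (x i ^ s) * PowerSeries.X)⁻¹)) *
        (∏ i, (1 + PowerSeries.C (x i) * PowerSeries.X)) := by
    rw [HgS, Finset.prod_congr rfl fun i _ => factor hs (x i), Finset.prod_mul_distrib,
      mul_comm]
    congr 1
    calc ∏ i, (1 - PowerSeries.C ((-x i) ^ s) * PowerSeries.X ^ s)⁻¹
        = ∏ i, pexp s ((1 - PowerSeries.C ((-x i) ^ s) * PowerSeries.X)⁻¹) := by
          refine Finset.prod_congr rfl fun i _ => ?_
          rw [pexp_inv hs _ (by simp), pexp_linear hs]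
      _ = pexp s (∏ i, (1 - PowerSeries.C ((-x i) ^ s) * PowerSeries.X)⁻¹) :=
          (pexp_prod hs _ _).symm
      _ = pexp s (PowerSeries.rescale ((-1) ^ s)
            (∏ i, (1 - PowerSeries.C (x i ^ s) * PowerSeries.X)⁻¹)) := by
          refine congrArg (pexp s) ?_
          rw [map_prod]
          refine Finset.prod_congr rfl fun i _ => ?_
          rw [rescale_inv _ _ (by simp), rescale_linear, ← neg_pow]
  rw [Hg, hHgS, PowerSeries.coeff_mul, Finset.Nat.sum_antidiagonal_eq_sum_range_succ_mk]
  simp only [coeff_pexp, PowerSeries.coeff_rescale]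
  rw [← Finset.sum_filter_of_ne (p := fun i => s ∣ i)
    (by
      intro i _ hne
      by_contra h
      rw [if_neg h, zero_mul] at hne
      exact hne rfl)]
  refine Finset.sum_nbij' (i := fun m => m / s) (j := fun j => s * j) ?_ ?_ ?_ ?_ ?_
  · intro m hm
    rw [Finset.mem_filter, Finset.mem_range] at hm
    rw [Finset.mem_range]
    have := Nat.div_le_div_right (c := s) (Nat.lt_succ_iff.mp hm.1)
    omega
  · intro j hj
    rw [Finset.mem_range] at hj
    rw [Finset.mem_filter, Finset.mem_range]
    refine ⟨Nat.lt_succ_of_le ?_, dvd_mul_right s j⟩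
    calc s * j ≤ s * (k / s) := Nat.mul_le_mul_left s (Nat.lt_succ_iff.mp hj)
      _ ≤ k := by rw [mul_comm]; exact Nat.div_mul_le_self k s
  · intro m hm
    rw [Finset.mem_filter] at hm
    exact Nat.mul_div_cancel' hm.2
  · intro j _
    exact Nat.mul_div_cancel_left j hs
  · intro m hm
    rw [Finset.mem_filter] at hm
    have hm' : s * (m / s) = m := Nat.mul_div_cancel' hm.2
    rw [if_pos hm.2, hg, eg, hm', ← pow_mul, hm', mul_assoc]
end

section
/- For positive integers k, n, s: E_k^{(s-1)}(x_1,...,x_n) = \sum_{j=0}^{\lfloor k/s \rfloor} (-1)^j e_j(x_1^s,...,x_n^s) \, h_{k-sj}(x_1,...,x_n). -/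
lemma factor_eq (y : ℂ) (s : ℕ) :
    ∑ j ∈ Finset.range s, PowerSeries.C (y ^ j) * PowerSeries.X ^ j
      = (1 + PowerSeries.C (-(y ^ s)) * PowerSeries.X ^ s)
        * (1 - PowerSeries.C y * PowerSeries.X)⁻¹ := by
  have h1 : ∀ j, PowerSeries.C (y ^ j) * PowerSeries.X ^ j
      = (PowerSeries.C y * PowerSeries.X) ^ j := by
    intro j; rw [mul_pow, map_pow]
  simp_rw [h1]
  have hu : (1 - PowerSeries.C y * PowerSeries.X)
      * (1 - PowerSeries.C y * PowerSeries.X)⁻¹ = 1 :=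
    PowerSeries.mul_inv_cancel _ (by simp)
  have geom := geom_sum_mul (PowerSeries.C y * PowerSeries.X) s
  have h2 : (∑ j ∈ Finset.range s, (PowerSeries.C y * PowerSeries.X) ^ j)
      * (1 - PowerSeries.C y * PowerSeries.X)
      = 1 + PowerSeries.C (-(y ^ s)) * PowerSeries.X ^ s := by
    have : PowerSeries.C (-(y ^ s)) * PowerSeries.X ^ s
        = -((PowerSeries.C y * PowerSeries.X) ^ s) := by
      rw [map_neg, map_pow, mul_pow]; ring
    rw [this]
    linear_combination -geom
  calc (∑ j ∈ Finset.range s, (PowerSeries.C y * PowerSeries.X) ^ j)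
      = (∑ j ∈ Finset.range s, (PowerSeries.C y * PowerSeries.X) ^ j)
        * ((1 - PowerSeries.C y * PowerSeries.X)
          * (1 - PowerSeries.C y * PowerSeries.X)⁻¹) := by rw [hu, mul_one]
    _ = _ := by rw [← mul_assoc, h2]

lemma prod_one_add (n s : ℕ) (a : Fin n → ℂ) :
    (∏ i, (1 + PowerSeries.C (a i) * PowerSeries.X ^ s))
      = ∑ T ∈ (Finset.univ : Finset (Fin n)).powerset,
          PowerSeries.C (∏ i ∈ T, a i) * PowerSeries.X ^ (s * T.card) := by
  simp_rw [add_comm (1 : PowerSeries ℂ)]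
  rw [Finset.prod_add]
  refine Finset.sum_congr rfl fun T _ => ?_
  rw [Finset.prod_const_one, mul_one, Finset.prod_mul_distrib, ← map_prod,
    Finset.prod_const, ← pow_mul]

lemma eg_eq (n : ℕ) (b : Fin n → ℂ) (j : ℕ) :
    eg n b j = ∑ T ∈ Finset.powersetCard j (Finset.univ : Finset (Fin n)),
      ∏ i ∈ T, b i := by
  have := prod_one_add n 1 b
  simp only [pow_one] at this
  rw [eg, this, map_sum]
  rw [Finset.sum_powerset]
  rw [Finset.sum_eq_single j]
  · refine Finset.sum_congr rfl fun T hT => ?_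
    rw [Finset.mem_powersetCard] at hT
    rw [one_mul, PowerSeries.coeff_C_mul, hT.2, PowerSeries.coeff_X_pow, if_pos rfl, mul_one]
  · intro m _ hm
    refine Finset.sum_eq_zero fun T hT => ?_
    rw [Finset.mem_powersetCard] at hT
    rw [one_mul, PowerSeries.coeff_C_mul, hT.2, PowerSeries.coeff_X_pow,
      if_neg (Ne.symm hm), mul_zero]
  · intro h
    refine Finset.sum_eq_zero fun T hT => ?_
    rw [Finset.mem_powersetCard] at hT
    exfalso
    apply h
    have hc : T.card ≤ n := by simpa using Finset.card_le_univ T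
    rw [Finset.mem_range, Nat.lt_succ_iff, Finset.card_univ, Fintype.card_fin]
    omega

lemma eg_eq_zero (n : ℕ) (b : Fin n → ℂ) (j : ℕ) (hj : n < j) : eg n b j = 0 := by
  rw [eg_eq, Finset.powersetCard_eq_empty.2 (by simpa using hj), Finset.sum_empty]

/-- `E_k^{(s-1)}(x₁,…,xₙ) = ∑_{j=0}^{⌊k/s⌋} (-1)^j e_j(x₁^s,…,xₙ^s) h_{k-sj}(x₁,…,xₙ)`. -/
theorem stmt12 (k n s : ℕ) (hk : 0 < k) (hn : 0 < n) (hs : 0 < s) (x : Fin n → ℂ) :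
    Eg (s - 1) n x k =
      ∑ j ∈ Finset.range (k / s + 1),
        (-1 : ℂ) ^ j * eg n (fun i => x i ^ s) j * hg n x (k - s * j) := by
  set H : PowerSeries ℂ := ∏ i, (1 - PowerSeries.C (x i) * PowerSeries.X)⁻¹ with hH
  have hstep1 : EgS (s - 1) n x
      = (∑ T ∈ (Finset.univ : Finset (Fin n)).powerset,
          PowerSeries.C (∏ i ∈ T, -(x i ^ s)) * PowerSeries.X ^ (s * T.card)) * H := by
    rw [EgS, show s - 1 + 1 = s from Nat.sub_add_cancel hs]
    simp_rw [factor_eq]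
    rw [Finset.prod_mul_distrib, prod_one_add]
  rw [Eg, hstep1, Finset.sum_mul, map_sum]
  have hcoeff : ∀ T : Finset (Fin n),
      PowerSeries.coeff k (PowerSeries.C (∏ i ∈ T, -(x i ^ s))
        * PowerSeries.X ^ (s * T.card) * H)
      = if s * T.card ≤ k then
          (∏ i ∈ T, -(x i ^ s)) * hg n x (k - s * T.card) else 0 := by
    intro T
    rw [mul_assoc, PowerSeries.coeff_C_mul, PowerSeries.coeff_X_pow_mul', hg, mul_ite, mul_zero]
  simp_rw [hcoeff]
  rw [Finset.sum_powerset]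
  have hinner : ∀ j, (∑ T ∈ Finset.powersetCard j (Finset.univ : Finset (Fin n)),
      if s * T.card ≤ k then (∏ i ∈ T, -(x i ^ s)) * hg n x (k - s * T.card) else 0)
      = if s * j ≤ k then (-1 : ℂ) ^ j * eg n (fun i => x i ^ s) j * hg n x (k - s * j)
        else 0 := by
    intro j
    have : ∀ T ∈ Finset.powersetCard j (Finset.univ : Finset (Fin n)),
        (if s * T.card ≤ k then (∏ i ∈ T, -(x i ^ s)) * hg n x (k - s * T.card) else 0)
        = (∏ i ∈ T, -(x i ^ s)) *
          (if s * j ≤ k then hg n x (k - s * j) else 0) := by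
      intro T hT
      rw [Finset.mem_powersetCard] at hT
      rw [hT.2, mul_ite, mul_zero]
    rw [Finset.sum_congr rfl this, ← Finset.sum_mul]
    have hsum : (∑ T ∈ Finset.powersetCard j (Finset.univ : Finset (Fin n)),
        ∏ i ∈ T, -(x i ^ s)) = (-1 : ℂ) ^ j * eg n (fun i => x i ^ s) j := by
      rw [eg_eq, Finset.mul_sum]
      refine Finset.sum_congr rfl fun T hT => ?_
      rw [Finset.mem_powersetCard] at hT
      have : ∀ i ∈ T, -(x i ^ s) = (-1 : ℂ) * (x i ^ s) := fun i _ => by ring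
      rw [Finset.prod_congr rfl this, Finset.prod_mul_distrib, Finset.prod_const, hT.2]
    rw [hsum, mul_ite, mul_zero, mul_assoc]
  simp_rw [hinner]
  -- now both sides are sums of the ite expression over different ranges
  set c : ℕ → ℂ := fun j =>
    if s * j ≤ k then (-1 : ℂ) ^ j * eg n (fun i => x i ^ s) j * hg n x (k - s * j) else 0
    with hc
  have hcardu : (Finset.univ : Finset (Fin n)).card = n := by simp
  rw [hcardu]
  set N := max n (k / s)
  have hL : (∑ j ∈ Finset.range (n + 1), c j) = ∑ j ∈ Finset.range (N + 1), c j := by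
    refine Finset.sum_subset (Finset.range_subset_range.2 (by omega)) fun j hj hj' => ?_
    rw [Finset.mem_range] at hj hj'
    have hnj : n < j := by omega
    have h0 := eg_eq_zero n (fun i => x i ^ s) j hnj
    simp only [hc, h0, mul_zero, zero_mul, ite_self]
  have hR : (∑ j ∈ Finset.range (k / s + 1),
      (-1 : ℂ) ^ j * eg n (fun i => x i ^ s) j * hg n x (k - s * j))
      = ∑ j ∈ Finset.range (N + 1), c j := by
    refine Finset.sum_congr rfl ?_ |>.trans
      (Finset.sum_subset (Finset.range_subset_range.2 (by omega)) fun j hj hj' => ?_)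
    · intro j hj
      rw [Finset.mem_range, Nat.lt_succ_iff] at hj
      have : s * j ≤ k := by
        rw [mul_comm]
        exact (Nat.le_div_iff_mul_le hs).1 hj
      simp only [hc]
      rw [if_pos this]
    · rw [Finset.mem_range, Nat.lt_succ_iff] at hj hj'
      have : k / s < j := by omega
      have hgt : k < s * j := by
        rw [mul_comm]
        exact (Nat.div_lt_iff_lt_mul hs).1 this
      simp only [hc]
      rw [if_neg (Nat.not_le.2 hgt)]
  rw [hL, hR]
end

section
/- For positive integers k, n, s: e_k(x_1^s,...,x_n^s) = (-1)^k \sum_{j=0}^{ks} (-1)^j e_j(x_1,...,x_n) E_{ks-j}^{(s-1)}(x_1,...,x_n). -/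
/-- Expansion of `∏ (1 + aᵢ X^m)` as a sum over subsets. -/
lemma prod_one_add_CXpow (n m : ℕ) (a : Fin n → ℂ) :
    ∏ i, (1 + PowerSeries.C (a i) * PowerSeries.X ^ m) =
      ∑ S ∈ (Finset.univ : Finset (Fin n)).powerset,
        PowerSeries.C (∏ i ∈ S, a i) * PowerSeries.X ^ (m * S.card) := by
  have := Finset.prod_add (fun i => PowerSeries.C (a i) * PowerSeries.X ^ m)
    (fun _ => (1 : PowerSeries ℂ)) (Finset.univ : Finset (Fin n))
  simp only [Finset.prod_const_one, mul_one] at this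
  simp only [add_comm (1 : PowerSeries ℂ)]
  rw [this]
  refine Finset.sum_congr rfl fun S _ => ?_
  rw [Finset.prod_mul_distrib, Finset.prod_const, ← map_prod, ← pow_mul]

lemma coeff_prod_one_add_CXpow (n m N : ℕ) (a : Fin n → ℂ) :
    PowerSeries.coeff N (∏ i, (1 + PowerSeries.C (a i) * PowerSeries.X ^ m)) =
      ∑ S ∈ (Finset.univ : Finset (Fin n)).powerset,
        if m * S.card = N then ∏ i ∈ S, a i else 0 := by
  rw [prod_one_add_CXpow, map_sum]
  refine Finset.sum_congr rfl fun S _ => ?_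
  rw [PowerSeries.coeff_C_mul, PowerSeries.coeff_X_pow]
  by_cases h : m * S.card = N
  · simp [h]
  · simp [h, Ne.symm h]

lemma coeff_prod_one_add_CX (n N : ℕ) (a : Fin n → ℂ) :
    PowerSeries.coeff N (∏ i, (1 + PowerSeries.C (a i) * PowerSeries.X)) =
      ∑ S ∈ (Finset.univ : Finset (Fin n)).powerset,
        if S.card = N then ∏ i ∈ S, a i else 0 := by
  have := coeff_prod_one_add_CXpow n 1 N a
  simpa using this

/-- `(1 - aX)(1 + aX + ⋯ + (aX)^{s-1}) = 1 - (aX)^s`. -/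
lemma factor_id (a : ℂ) (s : ℕ) :
    (1 + PowerSeries.C (-a) * PowerSeries.X) *
      (∑ j ∈ Finset.range s, PowerSeries.C (a ^ j) * PowerSeries.X ^ j) =
    1 + PowerSeries.C (-(a ^ s)) * PowerSeries.X ^ s := by
  simp only [map_neg, map_pow, neg_mul, ← mul_pow, ← sub_eq_add_neg]
  have := geom_sum_mul (PowerSeries.C a * PowerSeries.X) s
  linear_combination -this

/-- `e_k(x₁^s,…,xₙ^s) = (-1)^k ∑_{j=0}^{ks} (-1)^j e_j(x₁,…,xₙ) E_{ks-j}^{(s-1)}(x₁,…,xₙ)`. -/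
theorem stmt14 (k n s : ℕ) (hk : 0 < k) (hn : 0 < n) (hs : 0 < s) (x : Fin n → ℂ) :
    eg n (fun i => x i ^ s) k =
      (-1 : ℂ) ^ k *
        ∑ j ∈ Finset.range (k * s + 1),
          (-1 : ℂ) ^ j * eg n x j * Eg (s - 1) n x (k * s - j) := by
  have hs1 : s - 1 + 1 = s := Nat.succ_pred_eq_of_pos hs
  have hF : ∀ j, PowerSeries.coeff j (∏ i, (1 + PowerSeries.C (-(x i)) * PowerSeries.X)) =
      (-1 : ℂ) ^ j * eg n x j := by
    intro j
    rw [coeff_prod_one_add_CX, eg, coeff_prod_one_add_CX, Finset.mul_sum]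
    refine Finset.sum_congr rfl fun S _ => ?_
    by_cases h : S.card = j
    · have hneg : ∏ i ∈ S, -(x i) = (-1 : ℂ) ^ S.card * ∏ i ∈ S, x i := by
        rw [← Finset.prod_const, ← Finset.prod_mul_distrib]
        simp
      simp [h, hneg]
    · simp [h]
  have hprod : (∏ i, (1 + PowerSeries.C (-(x i)) * PowerSeries.X)) * EgS (s - 1) n x =
      ∏ i, (1 + PowerSeries.C (-(x i ^ s)) * PowerSeries.X ^ s) := by
    rw [EgS, ← Finset.prod_mul_distrib]
    refine Finset.prod_congr rfl fun i _ => ?_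
    rw [hs1]
    exact factor_id (x i) s
  have hsum : ∑ j ∈ Finset.range (k * s + 1),
      (-1 : ℂ) ^ j * eg n x j * Eg (s - 1) n x (k * s - j) =
      PowerSeries.coeff (k * s)
        ((∏ i, (1 + PowerSeries.C (-(x i)) * PowerSeries.X)) * EgS (s - 1) n x) := by
    rw [PowerSeries.coeff_mul, Finset.Nat.sum_antidiagonal_eq_sum_range_succ_mk]
    refine Finset.sum_congr rfl fun j _ => ?_
    rw [hF j, Eg]
  rw [hsum, hprod, eg, coeff_prod_one_add_CX, coeff_prod_one_add_CXpow, Finset.mul_sum]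
  refine Finset.sum_congr rfl fun S _ => ?_
  by_cases h : S.card = k
  · have hm : s * S.card = k * s := by rw [h, mul_comm]
    have hneg : ∏ i ∈ S, -(x i ^ s) = (-1 : ℂ) ^ S.card * ∏ i ∈ S, x i ^ s := by
      rw [← Finset.prod_const, ← Finset.prod_mul_distrib]
      simp
    simp only [h, hm, if_true, hneg]
    rw [if_pos (mul_comm s k), ← mul_assoc, ← mul_pow]
    simp
  · have hm : s * S.card ≠ k * s := by
      intro hc
      exact h (Nat.eq_of_mul_eq_mul_left hs (by rw [hc, mul_comm]))
    simp [h, hm]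
end

section
/- For positive integers k, n, s with s not dividing k: \sum_{j=0}^{k} (-1)^j h_j(x_1,...,x_n) H_{k-j}^{(s-1)}(x_1,...,x_n) = 0, and likewise \sum_{j=0}^{k} (-1)^j e_j(x_1,...,x_n) E_{k-j}^{(s-1)}(x_1,...,x_n) = 0. -/
open PowerSeries Finset

/-- Coefficients supported on multiples of `s`. -/
def SuppS (s : ℕ) (f : ℂ⟦X⟧) : Prop := ∀ m, ¬ s ∣ m → PowerSeries.coeff m f = 0

lemma suppS_one (s : ℕ) : SuppS s 1 := by
  intro m hm
  rw [PowerSeries.coeff_one]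
  simp only [ite_eq_right_iff]
  intro h; exact absurd (h ▸ dvd_zero s) hm

lemma suppS_mul {s : ℕ} {f g : ℂ⟦X⟧} (hf : SuppS s f) (hg : SuppS s g) :
    SuppS s (f * g) := by
  intro m hm
  rw [PowerSeries.coeff_mul]
  refine Finset.sum_eq_zero fun p hp => ?_
  rw [Finset.HasAntidiagonal.mem_antidiagonal] at hp
  by_cases h1 : s ∣ p.1
  · have h2 : ¬ s ∣ p.2 := fun h2 => hm (hp ▸ dvd_add h1 h2)
    rw [hg _ h2, mul_zero]
  · rw [hf _ h1, zero_mul]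

lemma suppS_prod {s n : ℕ} (f : Fin n → ℂ⟦X⟧) (hf : ∀ i, SuppS s (f i)) :
    SuppS s (∏ i, f i) := by
  induction n with
  | zero => simpa using suppS_one s
  | succ n ih =>
    rw [Fin.prod_univ_succ]
    exact suppS_mul (hf 0) (ih _ fun i => hf i.succ)

lemma suppS_inv {s : ℕ} {f : ℂ⟦X⟧} (hf : SuppS s f) : SuppS s f⁻¹ := by
  intro m
  induction m using Nat.strong_induction_on with
  | _ m ih =>
    intro hm
    have hm0 : m ≠ 0 := fun h => hm (h ▸ dvd_zero s)
    rw [PowerSeries.coeff_inv, if_neg hm0]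
    have : ∑ p ∈ antidiagonal m,
        (if p.2 < m then PowerSeries.coeff p.1 f * PowerSeries.coeff p.2 f⁻¹ else 0) = 0 := by
      refine Finset.sum_eq_zero fun p hp => ?_
      rw [Finset.HasAntidiagonal.mem_antidiagonal] at hp
      split_ifs with h
      · by_cases h1 : s ∣ p.1
        · have h2 : ¬ s ∣ p.2 := fun h2 => hm (hp ▸ dvd_add h1 h2)
          rw [ih p.2 h h2, mul_zero]
        · rw [hf _ h1, zero_mul]
      · rfl
    rw [this, mul_zero]

lemma suppS_one_sub_CXs (s : ℕ) (c : ℂ) : SuppS s (1 - PowerSeries.C c * PowerSeries.X ^ s) := by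
  intro m hm
  have hm0 : m ≠ 0 := fun h => hm (h ▸ dvd_zero s)
  have hms : m ≠ s := fun h => hm (h ▸ dvd_refl s)
  rw [map_sub, PowerSeries.coeff_one, if_neg hm0, PowerSeries.coeff_C_mul,
    PowerSeries.coeff_X_pow, if_neg hms]
  ring

lemma rescale_C' (a c : ℂ) : rescale a (PowerSeries.C c) = PowerSeries.C c := by
  ext n
  rw [coeff_rescale]
  simp only [PowerSeries.coeff_C]
  rcases eq_or_ne n 0 with h | h <;> simp [h]

lemma geom_factor (c : ℂ) (s : ℕ) :
    (∑ j ∈ Finset.range s, PowerSeries.C (c ^ j) * PowerSeries.X ^ j) *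
      (1 - PowerSeries.C c * PowerSeries.X) =
      1 - PowerSeries.C (c ^ s) * PowerSeries.X ^ s := by
  have h1 : ∀ j, PowerSeries.C (c ^ j) * PowerSeries.X ^ j
      = (PowerSeries.C c * PowerSeries.X) ^ j := by
    intro j; rw [mul_pow, map_pow]
  simp_rw [h1]
  have := geom_sum_mul (PowerSeries.C c * PowerSeries.X) s
  have h2 : (∑ j ∈ Finset.range s, (PowerSeries.C c * PowerSeries.X) ^ j) *
      (1 - PowerSeries.C c * PowerSeries.X)
      = -((∑ j ∈ Finset.range s, (PowerSeries.C c * PowerSeries.X) ^ j) *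
        ((PowerSeries.C c * PowerSeries.X) - 1)) := by ring
  rw [h2, this, mul_pow, ← map_pow]
  ring

lemma constCoeff_geom (c : ℂ) (s : ℕ) (hs : 0 < s) :
    PowerSeries.constantCoeff
      (∑ j ∈ Finset.range s, PowerSeries.C (c ^ j) * PowerSeries.X ^ j) = 1 := by
  rw [map_sum]
  rw [Finset.sum_eq_single 0]
  · simp
  · intro j _ hj
    simp [hj, zero_pow hj]
  · intro h; exact absurd (Finset.mem_range.2 hs) h

/-- If `s ∤ k` then `∑_{j=0}^{k} (-1)^j h_j H_{k-j}^{(s-1)} = 0` and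
`∑_{j=0}^{k} (-1)^j e_j E_{k-j}^{(s-1)} = 0`. -/
theorem stmt15 (k n s : ℕ) (hk : 0 < k) (hn : 0 < n) (hs : 0 < s) (hns : ¬ s ∣ k)
    (x : Fin n → ℂ) :
    (∑ j ∈ Finset.range (k + 1), (-1 : ℂ) ^ j * hg n x j * Hg (s - 1) n x (k - j) = 0) ∧
    (∑ j ∈ Finset.range (k + 1), (-1 : ℂ) ^ j * eg n x j * Eg (s - 1) n x (k - j) = 0) := by
  have hss : s - 1 + 1 = s := Nat.succ_pred_eq_of_pos hs
  set f : Fin n → ℂ⟦X⟧ := fun i => 1 - PowerSeries.C (x i) * PowerSeries.X with hf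
  set g : Fin n → ℂ⟦X⟧ := fun i => 1 + PowerSeries.C (x i) * PowerSeries.X with hgdef
  have hcf : ∀ i, PowerSeries.constantCoeff (f i) = 1 := by
    intro i; simp [hf]
  have hcg : ∀ i, PowerSeries.constantCoeff (g i) = 1 := by
    intro i; simp [hgdef]
  have hresf : ∀ i, rescale (-1 : ℂ) (f i) = g i := by
    intro i
    simp only [hf, hgdef, map_sub, map_one, map_mul, rescale_C', rescale_X]
    rw [map_neg, map_one]
    ring
  have hresg : ∀ i, rescale (-1 : ℂ) (g i) = f i := by
    intro i
    simp only [hf, hgdef, map_add, map_one, map_mul, rescale_C', rescale_X]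
    rw [map_neg, map_one]
    ring
  -- the H-part
  constructor
  · set A : Fin n → ℂ⟦X⟧ := fun i =>
      ∑ j ∈ Finset.range (s - 1 + 1), PowerSeries.C ((-x i) ^ j) * PowerSeries.X ^ j with hA
    set B : Fin n → ℂ⟦X⟧ := fun i =>
      1 - PowerSeries.C ((-x i) ^ s) * PowerSeries.X ^ s with hB
    have hAg : ∀ i, A i * g i = B i := by
      intro i
      have := geom_factor (-x i) s
      rw [hss] at hA
      rw [hA, hB]
      have hg' : (1 : ℂ⟦X⟧) - PowerSeries.C (-x i) * PowerSeries.X = g i := by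
        rw [map_neg, hgdef]; ring
      rw [← hg', this]
    have hA0 : ∀ i, PowerSeries.constantCoeff (A i) = 1 := by
      intro i; rw [hA]; rw [hss]; exact constCoeff_geom (-x i) s hs
    have hB0 : PowerSeries.constantCoeff (∏ i, B i) = 1 := by
      rw [map_prod]
      refine Finset.prod_eq_one fun i _ => ?_
      simp [hB, map_pow, zero_pow hs.ne']
    have key : rescale (-1 : ℂ) (∏ i, (f i)⁻¹) * HgS (s - 1) n x = (∏ i, B i)⁻¹ := by
      rw [PowerSeries.eq_inv_iff_mul_eq_one (by rw [hB0]; exact one_ne_zero)]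
      have hH : HgS (s - 1) n x = ∏ i, (A i)⁻¹ := rfl
      rw [map_prod, hH, ← Finset.prod_mul_distrib, ← Finset.prod_mul_distrib]
      refine Finset.prod_eq_one fun i _ => ?_
      have h1 : (A i)⁻¹ * B i = g i := by
        rw [← hAg i, ← mul_assoc, PowerSeries.inv_mul_cancel _ (by rw [hA0 i]; exact one_ne_zero),
          one_mul]
      rw [mul_assoc, h1, ← hresf i, ← map_mul,
        PowerSeries.inv_mul_cancel _ (by rw [hcf i]; exact one_ne_zero), map_one]
    have hsum : ∑ j ∈ Finset.range (k + 1), (-1 : ℂ) ^ j * hg n x j * Hg (s - 1) n x (k - j)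
        = PowerSeries.coeff k (rescale (-1 : ℂ) (∏ i, (f i)⁻¹) * HgS (s - 1) n x) := by
      rw [PowerSeries.coeff_mul, Finset.Nat.sum_antidiagonal_eq_sum_range_succ_mk]
      refine Finset.sum_congr rfl fun j _ => ?_
      rw [coeff_rescale]
      simp only [hg, Hg, hf, mul_assoc]
    rw [hsum, key]
    exact suppS_inv (suppS_prod B fun i => suppS_one_sub_CXs s _) k hns
  -- the E-part
  · set A : Fin n → ℂ⟦X⟧ := fun i =>
      ∑ j ∈ Finset.range (s - 1 + 1), PowerSeries.C ((x i) ^ j) * PowerSeries.X ^ j with hA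
    have key : rescale (-1 : ℂ) (∏ i, g i) * EgS (s - 1) n x
        = ∏ i, (1 - PowerSeries.C ((x i) ^ s) * PowerSeries.X ^ s) := by
      have hE : EgS (s - 1) n x = ∏ i, A i := rfl
      rw [map_prod, hE, ← Finset.prod_mul_distrib]
      refine Finset.prod_congr rfl fun i _ => ?_
      rw [hresg i]
      have := geom_factor (x i) s
      rw [hss] at hA
      rw [hA, mul_comm, this]
    have hsum : ∑ j ∈ Finset.range (k + 1), (-1 : ℂ) ^ j * eg n x j * Eg (s - 1) n x (k - j)
        = PowerSeries.coeff k (rescale (-1 : ℂ) (∏ i, g i) * EgS (s - 1) n x) := by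
      rw [PowerSeries.coeff_mul, Finset.Nat.sum_antidiagonal_eq_sum_range_succ_mk]
      refine Finset.sum_congr rfl fun j _ => ?_
      rw [coeff_rescale]
      simp only [eg, Eg, hgdef, mul_assoc]
    rw [hsum, key]
    exact suppS_prod _ (fun i => suppS_one_sub_CXs s _) k hns
end

section
/- For positive integers k, n, s: H_k^{(s)}(x_1,...,x_n) = \sum (-1)^{k + \sum_i (\lambda_i mod (s+1))} m_{\lambda}(x_1,...,x_n), where the sum is over partitions \lambda of k all of whose parts are congruent to 0 or 1 modulo s+1. In particular, when s is odd, H_k^{(s)}(x_1,...,x_n) = \sum m_{\lambda}(x_1,...,x_n) over the same set of partitions. -/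
open PowerSeries Finset

private lemma mod_succ_eq_one_iff {m e : ℕ} (hm : 2 ≤ m) : (e + 1) % m = 1 ↔ m ∣ e := by
  constructor
  · intro h
    have := Nat.div_add_mod (e + 1) m
    exact ⟨(e + 1) / m, by omega⟩
  · rintro ⟨q, rfl⟩
    rw [Nat.mul_add_mod]
    exact Nat.mod_eq_of_lt (by omega)

/-- coefficient function of the inverse series -/
private noncomputable def cf (m : ℕ) (x : ℂ) (d : ℕ) : ℂ :=
  if d % m = 0 then (-x) ^ d else if d % m = 1 then -((-x) ^ d) else 0

private lemma gser_inv (s : ℕ) (hs : 0 < s) (x : ℂ) :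
    (∑ j ∈ Finset.range (s + 1), PowerSeries.C ((-x) ^ j) * PowerSeries.X ^ j)⁻¹
      = PowerSeries.mk (cf (s + 1) x) := by
  set m := s + 1 with hm
  have hm2 : 2 ≤ m := by omega
  set g : PowerSeries ℂ := ∑ j ∈ Finset.range m, C ((-x) ^ j) * X ^ j with hg
  set G : PowerSeries ℂ := PowerSeries.mk (fun d => if m ∣ d then (-x) ^ d else 0) with hG
  have h1 : g * (1 + C x * X) = 1 - C ((-x) ^ m) * X ^ m := by
    have key : ∀ j : ℕ, (C ((-x) ^ j) * X ^ j) * (C x * X)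
        = -(C ((-x) ^ (j + 1)) * X ^ (j + 1)) := by
      intro j
      rw [pow_succ (-x), pow_succ X, map_mul, map_neg]
      ring
    have h := Finset.sum_range_sub' (f := fun j => C ((-x) ^ j) * X ^ j) m
    simp only [pow_zero, map_one, one_mul, pow_zero] at h
    rw [hg, mul_add, mul_one, Finset.sum_mul]
    simp_rw [key]
    rw [← Finset.sum_add_distrib]
    simp_rw [← sub_eq_add_neg]
    rw [h]
  have h2 : (1 - C ((-x) ^ m) * X ^ m) * G = 1 := by
    ext d
    rw [sub_mul, one_mul, map_sub, mul_assoc, coeff_C_mul, coeff_X_pow_mul']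
    by_cases hd : m ∣ d
    · rcases eq_or_ne d 0 with rfl | hd0
      · simp [hG, coeff_mk]
      · have hmd : m ≤ d := Nat.le_of_dvd (Nat.pos_of_ne_zero hd0) hd
        have hdm : m ∣ d - m := Nat.dvd_sub hd dvd_rfl
        rw [if_pos hmd]
        simp only [hG, coeff_mk, if_pos hd, if_pos hdm, PowerSeries.coeff_one, if_neg hd0]
        rw [← pow_add, Nat.add_sub_cancel' hmd]
        ring
    · have hd0 : d ≠ 0 := by rintro rfl; exact hd (dvd_zero m)
      simp only [hG, coeff_mk, if_neg hd, PowerSeries.coeff_one, if_neg hd0]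
      split_ifs with h h'
      · exfalso
        apply hd
        have h2 := Nat.dvd_add h' (dvd_refl m)
        rwa [Nat.sub_add_cancel h] at h2
      · ring
      · ring
  have h3 : (1 + C x * X) * G = PowerSeries.mk (cf m x) := by
    ext d
    rw [add_mul, one_mul, map_add, mul_assoc, coeff_C_mul]
    cases d with
    | zero =>
      simp [hG, cf, coeff_zero_X_mul]
    | succ e =>
      rw [coeff_succ_X_mul]
      simp only [hG, coeff_mk, cf]
      by_cases he : m ∣ e
      · have h1' : (e + 1) % m = 1 := (mod_succ_eq_one_iff hm2).2 he
        have h0 : ¬ m ∣ (e + 1) := by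
          intro h
          have hh : m ∣ 1 := by
            have := Nat.dvd_sub h he
            simpa using this
          have := Nat.le_of_dvd one_pos hh
          omega
        rw [if_neg h0, if_pos he, h1', if_neg one_ne_zero, if_pos rfl, pow_succ]
        ring
      · rw [if_neg he, mul_zero, add_zero]
        by_cases h0 : m ∣ e + 1
        · obtain ⟨q, hq⟩ := h0
          have : (e + 1) % m = 0 := by rw [hq, Nat.mul_mod_right]
          rw [if_pos ⟨q, hq⟩, this, if_pos rfl]
        · have hne0 : (e + 1) % m ≠ 0 := fun h => h0 (Nat.dvd_of_mod_eq_zero h)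
          have hne1 : (e + 1) % m ≠ 1 := fun h => he ((mod_succ_eq_one_iff hm2).1 h)
          rw [if_neg h0, if_neg hne0, if_neg hne1]
  have hc : PowerSeries.constantCoeff g ≠ 0 := by
    have : PowerSeries.constantCoeff g = 1 := by
      rw [hg, map_sum]
      rw [Finset.sum_eq_single 0]
      · simp
      · intro b _ hb
        simp [map_mul, zero_pow hb]
      · intro h
        exact absurd (Finset.mem_range.mpr (by omega)) h
    rw [this]
    exact one_ne_zero
  symm
  rw [PowerSeries.eq_inv_iff_mul_eq_one hc, ← h3]
  calc (1 + C x * X) * G * g = g * (1 + C x * X) * G := by ring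
    _ = (1 - C ((-x) ^ m) * X ^ m) * G := by rw [h1]
    _ = 1 := h2

private lemma Hg_eq_sum (s n : ℕ) (hs : 0 < s) (x : Fin n → ℂ) (k : ℕ) :
    Hg s n x k = ∑ f ∈ Finset.filter (fun f : Fin n → ℕ => ∑ i, f i = k)
        (Fintype.piFinset fun _ => Finset.range (k + 1)),
      ∏ i, cf (s + 1) (x i) (f i) := by
  have hH : HgS s n x = ∏ i, PowerSeries.mk (cf (s + 1) (x i)) := by
    unfold HgS
    exact Finset.prod_congr rfl fun i _ => gser_inv s hs (x i)
  rw [Hg, hH, PowerSeries.coeff_prod]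
  refine Finset.sum_nbij' (fun l => ⇑l) (fun f => Finsupp.equivFunOnFinite.symm f)
    ?_ ?_ ?_ ?_ ?_
  · intro l hl
    rw [Finset.mem_finsuppAntidiag] at hl
    rw [Finset.mem_filter]
    have hsum : ∑ j, l j = k := hl.1
    refine ⟨?_, hsum⟩
    rw [Fintype.mem_piFinset]
    intro i
    rw [Finset.mem_range]
    show l i < k + 1
    have : l i ≤ ∑ j, l j := Finset.single_le_sum (fun j _ => Nat.zero_le _) (Finset.mem_univ i)
    omega
  · intro f hf
    rw [Finset.mem_filter] at hf
    rw [Finset.mem_finsuppAntidiag]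
    refine ⟨?_, Finset.subset_univ _⟩
    simpa using hf.2
  · intro l _
    exact Finsupp.equivFunOnFinite_symm_coe l
  · intro f _
    rfl
  · intro l _
    exact Finset.prod_congr rfl fun i _ => by rw [coeff_mk]

private lemma filter_ne_zero_sum (M : Multiset ℕ) :
    (Multiset.filter (fun a => a ≠ 0) M).sum = M.sum := by
  conv_rhs => rw [← Multiset.filter_add_not (fun a => a ≠ 0) M]
  rw [Multiset.sum_add]
  have h0 : (Multiset.filter (fun a => ¬ a ≠ 0) M).sum = 0 := by
    apply Multiset.sum_eq_zero
    intro y hy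
    simpa using Multiset.of_mem_filter hy
  omega

private lemma filter_ne_zero_map_sum (M : Multiset ℕ) (g : ℕ → ℕ) (hg : g 0 = 0) :
    ((Multiset.filter (fun a => a ≠ 0) M).map g).sum = (M.map g).sum := by
  conv_rhs => rw [← Multiset.filter_add_not (fun a => a ≠ 0) M]
  rw [Multiset.map_add, Multiset.sum_add]
  have h0 : ((Multiset.filter (fun a => ¬ a ≠ 0) M).map g).sum = 0 := by
    apply Multiset.sum_eq_zero
    intro y hy
    obtain ⟨a, ha, rfl⟩ := Multiset.mem_map.1 hy
    have := Multiset.of_mem_filter ha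
    simp only [ne_eq, not_not] at this
    rw [this, hg]
  omega

private lemma cf_val {m : ℕ} (x : ℂ) {d : ℕ} (h : d % m = 0 ∨ d % m = 1) :
    cf m x d = (-1) ^ (d + d % m) * x ^ d := by
  unfold cf
  rcases h with h | h <;> rw [h]
  · rw [if_pos rfl, neg_pow, add_zero]
  · rw [if_neg one_ne_zero, if_pos rfl, neg_pow, pow_add, pow_one]
    ring

/-- the partition associated to an exponent vector -/
private def toPart (k n : ℕ) (f : Fin n → ℕ) : Nat.Partition k :=
  if h : (Multiset.filter (fun a => a ≠ 0) (Finset.univ.val.map f)).sum = k then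
    ⟨Multiset.filter (fun a => a ≠ 0) (Finset.univ.val.map f),
      fun {p} hp => Nat.pos_of_ne_zero (by simpa using Multiset.of_mem_filter hp), h⟩
  else Nat.Partition.indiscrete k

/-- `H_k^{(s)} = ∑_{λ ⊢ k, λᵢ ≡ 0,1 (mod s+1)} (-1)^{k + ∑ (λᵢ mod (s+1))} m_λ`;
in particular, for odd `s`, `H_k^{(s)} = ∑_{λ ⊢ k, λᵢ ≡ 0,1 (mod s+1)} m_λ`. -/
theorem stmt16 (k n s : ℕ) (hk : 0 < k) (hn : 0 < n) (hs : 0 < s) (x : Fin n → ℂ) :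
    (Hg s n x k =
      ∑ lam ∈ Finset.filter
          (fun lam : Nat.Partition k => ∀ p ∈ lam.parts, p % (s + 1) = 0 ∨ p % (s + 1) = 1)
          Finset.univ,
        (-1 : ℂ) ^ (k + (lam.parts.map (fun p => p % (s + 1))).sum) * msym n x k lam) ∧
    (Odd s →
      Hg s n x k =
        ∑ lam ∈ Finset.filter
            (fun lam : Nat.Partition k => ∀ p ∈ lam.parts, p % (s + 1) = 0 ∨ p % (s + 1) = 1)
            Finset.univ,
          msym n x k lam) := by
  classical
  have hΦsum : ∀ f : Fin n → ℕ,
      (Multiset.filter (fun a => a ≠ 0) (Finset.univ.val.map f)).sum = ∑ i, f i := by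
    intro f
    rw [filter_ne_zero_sum]
    rfl
  have hfiber : ∀ lam : Nat.Partition k,
      Finset.filter (fun f => toPart k n f = lam)
        (Finset.filter (fun f : Fin n → ℕ => ∑ i, f i = k)
          (Fintype.piFinset fun _ => Finset.range (k + 1)))
      = Finset.filter (fun f : Fin n → ℕ =>
          Multiset.filter (fun a => a ≠ 0) (Finset.univ.val.map f) = lam.parts)
          (Fintype.piFinset fun _ => Finset.range (k + 1)) := by
    intro lam
    ext f
    simp only [Finset.mem_filter]
    constructor
    · rintro ⟨⟨hpi, hsum⟩, hG⟩
      refine ⟨hpi, ?_⟩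
      have hs' : (Multiset.filter (fun a => a ≠ 0) (Finset.univ.val.map f)).sum = k := by
        rw [hΦsum f]; exact hsum
      rw [toPart, dif_pos hs'] at hG
      exact congrArg Nat.Partition.parts hG
    · rintro ⟨hpi, hparts⟩
      have hs' : (Multiset.filter (fun a => a ≠ 0) (Finset.univ.val.map f)).sum = k := by
        rw [hparts]; exact lam.parts_sum
      have hsum : ∑ i, f i = k := by rw [← hΦsum f]; exact hs'
      refine ⟨⟨hpi, hsum⟩, ?_⟩
      rw [toPart, dif_pos hs']
      exact Nat.Partition.ext hparts
  have hmain : Hg s n x k =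
      ∑ lam ∈ Finset.filter
          (fun lam : Nat.Partition k => ∀ p ∈ lam.parts, p % (s + 1) = 0 ∨ p % (s + 1) = 1)
          Finset.univ,
        (-1 : ℂ) ^ (k + (lam.parts.map (fun p => p % (s + 1))).sum) * msym n x k lam := by
    rw [Hg_eq_sum s n hs x k,
      ← Finset.sum_fiberwise_of_maps_to (g := toPart k n) (fun f _ => Finset.mem_univ _)
        (fun f => ∏ i, cf (s + 1) (x i) (f i))]
    rw [← Finset.sum_subset (Finset.filter_subset
        (fun lam : Nat.Partition k => ∀ p ∈ lam.parts, p % (s + 1) = 0 ∨ p % (s + 1) = 1)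
        Finset.univ) ?_]
    · -- equal sums over good partitions
      apply Finset.sum_congr rfl
      intro lam hlam
      rw [Finset.mem_filter] at hlam
      rw [hfiber lam, msym, Finset.mul_sum]
      apply Finset.sum_congr rfl
      intro f hf
      rw [Finset.mem_filter] at hf
      obtain ⟨hpi, hparts⟩ := hf
      have hres : ∀ i, f i % (s + 1) = 0 ∨ f i % (s + 1) = 1 := by
        intro i
        rcases eq_or_ne (f i) 0 with h0 | h0
        · left; rw [h0, Nat.zero_mod]
        · apply hlam.2
          rw [← hparts]
          exact Multiset.mem_filter.2 ⟨Multiset.mem_map.2 ⟨i, by simp, rfl⟩, h0⟩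
      have hsumf : ∑ i, f i = k := by rw [← hΦsum f, hparts]; exact lam.parts_sum
      calc ∏ i, cf (s + 1) (x i) (f i)
          = ∏ i, ((-1 : ℂ) ^ (f i + f i % (s + 1)) * x i ^ f i) :=
            Finset.prod_congr rfl fun i _ => cf_val (x i) (hres i)
        _ = (-1 : ℂ) ^ (∑ i, (f i + f i % (s + 1))) * ∏ i, x i ^ f i := by
            rw [Finset.prod_mul_distrib, Finset.prod_pow_eq_pow_sum]
        _ = (-1 : ℂ) ^ (k + (lam.parts.map (fun p => p % (s + 1))).sum) * ∏ i, x i ^ f i := by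
            congr 2
            rw [Finset.sum_add_distrib, hsumf]
            congr 1
            rw [← hparts, filter_ne_zero_map_sum _ _ (Nat.zero_mod (s + 1)),
              Multiset.map_map]
            rfl
    · -- bad partitions contribute zero
      intro lam _ hbad
      rw [Finset.mem_filter] at hbad
      push_neg at hbad
      obtain ⟨p, hp, hb0, hb1⟩ := hbad (Finset.mem_univ lam)
      rw [hfiber lam]
      apply Finset.sum_eq_zero
      intro f hf
      rw [Finset.mem_filter] at hf
      have hpΦ : p ∈ Multiset.filter (fun a => a ≠ 0) (Finset.univ.val.map f) := by
        rw [hf.2]; exact hp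
      obtain ⟨hpm, -⟩ := Multiset.mem_filter.1 hpΦ
      obtain ⟨i, -, rfl⟩ := Multiset.mem_map.1 hpm
      apply Finset.prod_eq_zero (Finset.mem_univ i)
      rw [cf, if_neg hb0, if_neg hb1]
  refine ⟨hmain, fun hodd => ?_⟩
  rw [hmain]
  apply Finset.sum_congr rfl
  intro lam hlam
  rw [Finset.mem_filter] at hlam
  have h2m : 2 ∣ (s + 1) := (Odd.add_one hodd).two_dvd
  have heven : Even (k + (lam.parts.map (fun p => p % (s + 1))).sum) := by
    have hdvd : 2 ∣ lam.parts.sum + (lam.parts.map (fun p => p % (s + 1))).sum := by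
      have hrw : lam.parts.sum + (lam.parts.map (fun p => p % (s + 1))).sum
          = (lam.parts.map (fun p => p + p % (s + 1))).sum := by
        rw [Multiset.sum_map_add]
        congr 1
        rw [Multiset.map_id']
      rw [hrw]
      apply Multiset.dvd_sum
      intro y hy
      obtain ⟨p, hp, rfl⟩ := Multiset.mem_map.1 hy
      have h2 : p % (s + 1) % 2 = p % 2 := Nat.mod_mod_of_dvd p h2m
      rcases hlam.2 p hp with h | h <;> omega
    rw [lam.parts_sum] at hdvd
    obtain ⟨c, hc⟩ := hdvd
    exact ⟨c, by omega⟩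
  rw [Even.neg_one_pow heven, one_mul]
end

section
/- For positive integers k, n, s: the bi^s-nomial coefficient satisfies \binom{n}{k}_{s-1} = \sum_{j=0}^{\lfloor k/s \rfloor} (-1)^j \binom{n}{j} \binom{n+k-sj-1}{k-sj}, and conversely \binom{n}{k} = \sum_{j=0}^{ks} (-1)^{k+j} \binom{n}{j} \binom{n}{ks-j}_{s-1}. -/
open PowerSeries Finset

private lemma expandE (n s : ℕ) :
    ((1 : ℤ⟦X⟧) - X ^ s) ^ n =
      ∑ j ∈ Finset.range (n + 1),
        PowerSeries.C (R := ℤ) ((-1) ^ j * n.choose j) * X ^ (s * j) := by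
  rw [sub_eq_add_neg, add_comm, add_pow]
  refine Finset.sum_congr rfl fun j hj => ?_
  rw [neg_pow, one_pow, mul_one, pow_mul', map_mul, map_pow, map_neg, map_one, map_natCast]
  ring

private lemma coeffL1 (n i : ℕ) :
    (PowerSeries.coeff (R := ℤ) i) (((1 : ℤ⟦X⟧) - X) ^ n) = (-1) ^ i * n.choose i := by
  have := expandE n 1
  simp only [pow_one, one_mul] at this
  rw [this, map_sum]
  simp only [PowerSeries.coeff_C_mul, PowerSeries.coeff_X_pow, mul_ite, mul_one, mul_zero]
  rw [Finset.sum_ite_eq (Finset.range (n+1)) i (fun j => (-1:ℤ)^j * n.choose j)]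
  split_ifs with h
  · rfl
  · have : n < i := by simpa using h
    rw [Nat.choose_eq_zero_of_lt this]; ring

private lemma coeffL2 (n s k : ℕ) (hs : 0 < s) :
    (PowerSeries.coeff (R := ℤ) (k * s)) (((1 : ℤ⟦X⟧) - X ^ s) ^ n) = (-1) ^ k * n.choose k := by
  rw [expandE, map_sum]
  simp only [PowerSeries.coeff_C_mul, PowerSeries.coeff_X_pow]
  have key : ∀ j : ℕ, (k * s = s * j) ↔ (k = j) := by
    intro j
    constructor
    · intro h; rw [mul_comm] at h; exact Nat.eq_of_mul_eq_mul_left hs h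
    · intro h; subst h; ring
  simp only [key, mul_ite, mul_one, mul_zero]
  rw [Finset.sum_ite_eq (Finset.range (n+1)) k (fun j => (-1:ℤ)^j * n.choose j)]
  split_ifs with h
  · rfl
  · have : n < k := by simpa using h
    rw [Nat.choose_eq_zero_of_lt this]; ring



/-- The bi`s`nomial coefficient `(n choose k)_s`: the coefficient of `t^k`
in `(1 + t + t² + ⋯ + t^s)^n`. -/
noncomputable def bis (s n k : ℕ) : ℤ :=
  PowerSeries.coeff (R := ℤ) k ((∑ j ∈ Finset.range (s + 1), PowerSeries.X ^ j) ^ n)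

/-- `(n choose k)_{s-1} = ∑_{j=0}^{⌊k/s⌋} (-1)^j (n choose j) (n+k-sj-1 choose k-sj)`
and `(n choose k) = ∑_{j=0}^{ks} (-1)^{k+j} (n choose j) (n choose ks-j)_{s-1}`. -/
theorem stmt19 (k n s : ℕ) (hk : 0 < k) (hn : 0 < n) (hs : 0 < s) :
    (bis (s - 1) n k =
      ∑ j ∈ Finset.range (k / s + 1),
        (-1 : ℤ) ^ j * n.choose j * ((n + (k - s * j) - 1).choose (k - s * j))) ∧
    ((n.choose k : ℤ) =
      ∑ j ∈ Finset.range (k * s + 1),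
        (-1 : ℤ) ^ (k + j) * n.choose j * bis (s - 1) n (k * s - j)) := by
  set G : ℤ⟦X⟧ := ∑ j ∈ Finset.range s, X ^ j with hGdef
  have hbis : ∀ b, bis (s - 1) n b = PowerSeries.coeff (R := ℤ) b (G ^ n) := by
    intro b
    rw [bis, Nat.sub_add_cancel hs]
  have hG : G * ((1 : ℤ⟦X⟧) - X) = 1 - X ^ s := by
    have h := geom_sum_mul (X : ℤ⟦X⟧) s
    rw [hGdef]
    linear_combination -h
  have hGn : G ^ n * ((1 : ℤ⟦X⟧) - X) ^ n = (1 - X ^ s) ^ n := by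
    rw [← mul_pow, hG]
  set D : ℤ⟦X⟧ := (PowerSeries.invOneSubPow ℤ n).val with hDdef
  have hU : ((1 : ℤ⟦X⟧) - X) ^ n * D = 1 := by
    rw [hDdef, ← PowerSeries.invOneSubPow_inv_eq_one_sub_pow]
    exact (PowerSeries.invOneSubPow ℤ n).inv_val
  have hD : ∀ m : ℕ, PowerSeries.coeff (R := ℤ) m D = ((n - 1 + m).choose (n - 1) : ℤ) := by
    intro m
    rw [hDdef, PowerSeries.invOneSubPow_val_eq_mk_sub_one_add_choose_of_pos ℤ n hn,
      PowerSeries.coeff_mk]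
  have hGrep : G ^ n = ((1 : ℤ⟦X⟧) - X ^ s) ^ n * D := by
    calc G ^ n = G ^ n * (((1 : ℤ⟦X⟧) - X) ^ n * D) := by rw [hU, mul_one]
    _ = (G ^ n * ((1 : ℤ⟦X⟧) - X) ^ n) * D := by ring
    _ = _ := by rw [hGn]
  -- the common summand
  set f : ℕ → ℤ := fun j => (-1) ^ j * n.choose j *
    (if s * j ≤ k then ((n + (k - s * j) - 1).choose (k - s * j) : ℤ) else 0) with hfdef
  constructor
  · -- part 1
    rw [hbis, hGrep, expandE, Finset.sum_mul, map_sum]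
    have h1 : ∀ j ∈ Finset.range (n + 1),
        PowerSeries.coeff (R := ℤ) k (PowerSeries.C (R := ℤ) ((-1) ^ j * n.choose j) * X ^ (s * j) * D)
          = f j := by
      intro j hj
      rw [mul_assoc, PowerSeries.coeff_C_mul, PowerSeries.coeff_X_pow_mul']
      rw [hfdef]
      simp only
      congr 1
      split_ifs with hle
      · rw [hD]
        set m := k - s * j with hm
        have e2 : (n - 1 + m).choose (n - 1) = (n - 1 + m).choose m := by
          conv_lhs => rw [← Nat.choose_symm (Nat.le_add_right (n - 1) m)]
          congr 1
          omega
        rw [e2]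
        congr 2
        omega
      · rfl
    rw [Finset.sum_congr rfl h1]
    have hsub1 : Finset.range (n + 1) ⊆ Finset.range (n + k / s + 2) := by
      exact Finset.range_subset_range.mpr (by generalize k / s = d; omega)
    have hsub2 : Finset.range (k / s + 1) ⊆ Finset.range (n + k / s + 2) := by
      exact Finset.range_subset_range.mpr (by generalize k / s = d; omega)
    have hz1 : ∀ x ∈ Finset.range (n + k / s + 2), x ∉ Finset.range (n + 1) → f x = 0 := by
      intro x _ hx
      have : n < x := by simpa using hx
      rw [hfdef]; simp only
      rw [Nat.choose_eq_zero_of_lt this]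
      push_cast; ring
    have hz2 : ∀ x ∈ Finset.range (n + k / s + 2), x ∉ Finset.range (k / s + 1) → f x = 0 := by
      intro x _ hx
      have hxk : k / s < x := by simpa using hx
      have h1 : k < s * (k / s) + s := by
        have := Nat.div_add_mod k s
        have := Nat.mod_lt k hs
        omega
      have h2 : s * (k / s) + s ≤ s * x := by
        calc s * (k / s) + s = s * (k / s + 1) := by ring
        _ ≤ s * x := Nat.mul_le_mul_left s hxk
      rw [hfdef]; simp only
      rw [if_neg (by omega)]
      ring
    rw [Finset.sum_subset hsub1 hz1, ← Finset.sum_subset hsub2 hz2]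
    refine Finset.sum_congr rfl fun j hj => ?_
    have hjle : j ≤ k / s := by simpa [Nat.lt_succ_iff] using hj
    have hsjk : s * j ≤ k := by
      calc s * j ≤ s * (k / s) := Nat.mul_le_mul_left s hjle
      _ = (k / s) * s := mul_comm _ _
      _ ≤ k := Nat.div_mul_le_self k s
    rw [hfdef]; simp only
    rw [if_pos hsjk]
  · -- part 2
    have h2 : PowerSeries.coeff (R := ℤ) (k * s) (((1 : ℤ⟦X⟧) - X) ^ n * G ^ n)
        = (-1) ^ k * n.choose k := by
      rw [mul_comm (((1 : ℤ⟦X⟧) - X) ^ n) (G ^ n), hGn, coeffL2 n s k hs]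
    have h3 : PowerSeries.coeff (R := ℤ) (k * s) (((1 : ℤ⟦X⟧) - X) ^ n * G ^ n)
        = ∑ j ∈ Finset.range (k * s + 1),
            (-1 : ℤ) ^ j * n.choose j * bis (s - 1) n (k * s - j) := by
      rw [PowerSeries.coeff_mul, Finset.Nat.sum_antidiagonal_eq_sum_range_succ_mk]
      refine Finset.sum_congr rfl fun j hj => ?_
      rw [coeffL1, hbis, mul_assoc]
    have h4 : ∑ j ∈ Finset.range (k * s + 1),
        (-1 : ℤ) ^ (k + j) * n.choose j * bis (s - 1) n (k * s - j)
        = (-1) ^ k * ∑ j ∈ Finset.range (k * s + 1),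
            (-1 : ℤ) ^ j * n.choose j * bis (s - 1) n (k * s - j) := by
      rw [Finset.mul_sum]
      refine Finset.sum_congr rfl fun j _ => ?_
      rw [pow_add]; ring
    rw [h4, ← h3, h2]
    have : ((-1 : ℤ)) ^ k * (-1) ^ k = 1 := by
      rw [← pow_add]
      exact Even.neg_one_pow ⟨k, rfl⟩
    rw [← mul_assoc, this, one_mul]
end
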